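/- arXiv:1204.2623 — 2 statements merged into one kernel-verified Lean document; each statement's English description precedes it below -/
import Mathlib

section
/- If 1 ≤ r ≤ p ≤ ∞ and 1/p + 1/q = 1/r, then l_p^{l_r} = l_q (with equivalent norms); if 1 ≤ p < r ≤ ∞, then l_p^{l_r} = l_∞. -/
open Filter Topology
open scoped ENNReal

namespace Paper

/-- Coordinatewise product of two sequences. -/
def pmul (x y : ℕ → ℝ) : ℕ → ℝ := fun n => x n * y n

/-- Membership in `c₀`: the sequence converges to zero. -/
def MemC0 (x : ℕ → ℝ) : Prop := Tendsto x atTop (nhds 0)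

/-- A symmetric sequence space: a solid, rearrangement-invariant Banach
subspace of `c₀`, normalized so that `‖e₁‖ = 1`.  The norm function is
defined (as a real-valued function) on all sequences; the axioms concern
its behaviour on the carrier. -/
structure SymmSeqSpace where
  carrier : Set (ℕ → ℝ)
  nrm : (ℕ → ℝ) → ℝ
  mem_c0 : ∀ x ∈ carrier, MemC0 x
  zero_mem : (0 : ℕ → ℝ) ∈ carrier
  add_mem : ∀ x ∈ carrier, ∀ y ∈ carrier, x + y ∈ carrier
  smul_mem : ∀ (c : ℝ), ∀ x ∈ carrier, (c • x) ∈ carrier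
  nrm_nonneg : ∀ x, 0 ≤ nrm x
  nrm_eq_zero_iff : ∀ x ∈ carrier, (nrm x = 0 ↔ x = 0)
  nrm_add : ∀ x ∈ carrier, ∀ y ∈ carrier, nrm (x + y) ≤ nrm x + nrm y
  nrm_smul : ∀ (c : ℝ) (x : ℕ → ℝ), nrm (c • x) = |c| * nrm x
  solid : ∀ x y : ℕ → ℝ, (∀ n, |x n| ≤ |y n|) → y ∈ carrier →
      x ∈ carrier ∧ nrm x ≤ nrm y
  symm : ∀ (σ : Equiv.Perm ℕ), ∀ x ∈ carrier,
      (x ∘ σ) ∈ carrier ∧ nrm (x ∘ σ) = nrm x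
  complete : ∀ u : ℕ → (ℕ → ℝ), (∀ n, u n ∈ carrier) →
      (∀ ε : ℝ, 0 < ε → ∃ N, ∀ m ≥ N, ∀ k ≥ N, nrm (u m - u k) < ε) →
      ∃ x ∈ carrier, Tendsto (fun n => nrm (u n - x)) atTop (nhds 0)
  nrm_unit : nrm (fun n => if n = 0 then (1 : ℝ) else 0) = 1

/-- The `ℓ_p` norm of a sequence, `1 ≤ p ≤ ∞`. -/
noncomputable def lpNrm (p : ℝ≥0∞) (x : ℕ → ℝ) : ℝ :=
  if p = ∞ then ⨆ n, |x n| else (∑' n, |x n| ^ p.toReal) ^ (1 / p.toReal)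

/-- Membership in `ℓ_p`. -/
def MemLp (p : ℝ≥0∞) (x : ℕ → ℝ) : Prop :=
  if p = ∞ then BddAbove (Set.range fun n => |x n|)
  else Summable fun n => |x n| ^ p.toReal

/-- The set `ℓ_p`. -/
def lpSet (p : ℝ≥0∞) : Set (ℕ → ℝ) := {x | MemLp p x}

/-- `(∑_k |x_k|^p)^{1/p}` computed coordinatewise (with the sup for `p = ∞`). -/
noncomputable def pSum (p : ℝ≥0∞) {n : ℕ} (x : Fin n → ℕ → ℝ) : ℕ → ℝ :=
  if p = ∞ then fun m => ⨆ k, |x k m|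
  else fun m => (∑ k, |x k m| ^ p.toReal) ^ (1 / p.toReal)

/-- `(∑_k ‖x_k‖_E^p)^{1/p}` (with the sup for `p = ∞`). -/
noncomputable def pNrmSum (E : SymmSeqSpace) (p : ℝ≥0∞) {n : ℕ}
    (x : Fin n → ℕ → ℝ) : ℝ :=
  if p = ∞ then ⨆ k, E.nrm (x k)
  else (∑ k, E.nrm (x k) ^ p.toReal) ^ (1 / p.toReal)

/-- `E` is `p`-convex with constant `C`. -/
def IsPConvex (E : SymmSeqSpace) (p : ℝ≥0∞) (C : ℝ) : Prop :=
  ∀ (n : ℕ) (x : Fin n → ℕ → ℝ), (∀ k, x k ∈ E.carrier) →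
    pSum p x ∈ E.carrier ∧ E.nrm (pSum p x) ≤ C * pNrmSum E p x

/-- `E` is `q`-concave with constant `C`. -/
def IsQConcave (E : SymmSeqSpace) (q : ℝ≥0∞) (C : ℝ) : Prop :=
  ∀ (n : ℕ) (x : Fin n → ℕ → ℝ), (∀ k, x k ∈ E.carrier) →
    pNrmSum E q x ≤ C * E.nrm (pSum q x)

/-- The Köthe dual of a set of sequences. -/
def kDual (E : Set (ℕ → ℝ)) : Set (ℕ → ℝ) :=
  {y | BddAbove (Set.range fun n => |y n|) ∧
    ∀ x ∈ E, Summable fun n => |x n * y n|}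

/-- The Köthe dual norm. -/
noncomputable def kDualNrm (E : Set (ℕ → ℝ)) (eN : (ℕ → ℝ) → ℝ)
    (y : ℕ → ℝ) : ℝ :=
  sSup {c | ∃ x ∈ E, eN x ≤ 1 ∧ c = ∑' n, |x n * y n|}

/-- The space `E^F` of coordinatewise multipliers from `E` into `F`. -/
def mulSet (E F : Set (ℕ → ℝ)) : Set (ℕ → ℝ) :=
  {x | ∀ y ∈ E, pmul x y ∈ F}

/-- The multiplier norm on `E^F`. -/
noncomputable def mulNrm (E : Set (ℕ → ℝ)) (eN fN : (ℕ → ℝ) → ℝ)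
    (x : ℕ → ℝ) : ℝ :=
  sSup {c | ∃ y ∈ E, eN y ≤ 1 ∧ c = fN (pmul x y)}

/-- The `p`-convexification `E^p = {x : |x|^p ∈ E}` of a set of sequences. -/
def convexif (E : Set (ℕ → ℝ)) (p : ℝ) : Set (ℕ → ℝ) :=
  {x | (fun n => |x n| ^ p) ∈ E}

/-- The norm of the `p`-convexification. -/
noncomputable def convexifNrm (eN : (ℕ → ℝ) → ℝ) (p : ℝ) (x : ℕ → ℝ) : ℝ :=
  (eN fun n => |x n| ^ p) ^ (1 / p)

/-- A matrix acting on a sequence: `(Ax)_i = ∑_j a_{ij} x_j`. -/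
noncomputable def matApply (A : ℕ → ℕ → ℝ) (x : ℕ → ℝ) : ℕ → ℝ :=
  fun i => ∑' j, A i j * x j

/-- The matrix `A` maps `Ec` into `Fc` (with absolutely convergent rows). -/
def MatMaps (A : ℕ → ℕ → ℝ) (Ec Fc : Set (ℕ → ℝ)) : Prop :=
  ∀ x ∈ Ec, (∀ i, Summable fun j => A i j * x j) ∧ matApply A x ∈ Fc

/-- `A` is a bounded operator from `(Ec, eN)` to `(Fc, fN)`. -/
def IsBddOp (A : ℕ → ℕ → ℝ) (Ec Fc : Set (ℕ → ℝ))
    (eN fN : (ℕ → ℝ) → ℝ) : Prop :=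
  MatMaps A Ec Fc ∧ ∃ C : ℝ, ∀ x ∈ Ec, fN (matApply A x) ≤ C * eN x

/-- The operator norm of a matrix from `(Ec, eN)` to `fN`. -/
noncomputable def opNrm (A : ℕ → ℕ → ℝ) (Ec : Set (ℕ → ℝ))
    (eN fN : (ℕ → ℝ) → ℝ) : ℝ :=
  sSup {c | ∃ x ∈ Ec, eN x ≤ 1 ∧ c = fN (matApply A x)}

/-- The transposed matrix. -/
def transpose (A : ℕ → ℕ → ℝ) : ℕ → ℕ → ℝ := fun i j => A j i

/-- The Schur (entrywise) product of two matrices. -/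
def schur (M A : ℕ → ℕ → ℝ) : ℕ → ℕ → ℝ := fun i j => M i j * A i j

/-- `M` is a Schur multiplier from `B((Ec,eN),(Fc,fN))` to itself. -/
def IsMultiplier (M : ℕ → ℕ → ℝ) (Ec Fc : Set (ℕ → ℝ))
    (eN fN : (ℕ → ℝ) → ℝ) : Prop :=
  ∀ A : ℕ → ℕ → ℝ, IsBddOp A Ec Fc eN fN → IsBddOp (schur M A) Ec Fc eN fN

/-- The Schur multiplier norm. -/
noncomputable def multNrm (M : ℕ → ℕ → ℝ) (Ec Fc : Set (ℕ → ℝ))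
    (eN fN : (ℕ → ℝ) → ℝ) : ℝ :=
  sSup {c | ∃ A : ℕ → ℕ → ℝ, IsBddOp A Ec Fc eN fN ∧
    opNrm A Ec eN fN ≤ 1 ∧ c = opNrm (schur M A) Ec eN fN}

/-- The norm of `F` is a Fatou norm. -/
def HasFatouNorm (F : SymmSeqSpace) : Prop :=
  ∀ x ∈ F.carrier, ∀ u : ℕ → (ℕ → ℝ), (∀ n, u n ∈ F.carrier) →
    (∀ n m, 0 ≤ u n m) → (∀ n m, u n m ≤ u (n + 1) m) →
    (∀ m, Tendsto (fun n => u n m) atTop (nhds (x m))) →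
    Tendsto (fun n => F.nrm (u n)) atTop (nhds (F.nrm x))

end Paper


namespace Aux

/-- Tangent-type inequality used for the Abel–Dini convergence lemma. -/
lemma key1 {u v δ : ℝ} (hu : 1 ≤ u) (huv : u ≤ v) (hδ0 : 0 < δ) (hδ1 : δ ≤ 1) :
    (v - u) / v ^ (1 + δ) ≤ (1/δ) * (u ^ (-δ) - v ^ (-δ)) := by
  have hu0 : (0:ℝ) < u := lt_of_lt_of_le one_pos hu
  have hv0 : (0:ℝ) < v := lt_of_lt_of_le hu0 huv
  set t : ℝ := u / v with htdef
  have ht0 : 0 < t := div_pos hu0 hv0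
  have ht1 : t ≤ 1 := (div_le_one hv0).2 huv
  have hamgm : t ^ δ ≤ δ * t + (1 - δ) := by
    have h := Real.geom_mean_le_arith_mean2_weighted (w₁ := δ) (w₂ := 1-δ) (p₁ := t) (p₂ := 1)
      hδ0.le (by linarith) ht0.le zero_le_one (by ring)
    simpa using h
  have hs : 0 < t ^ δ := Real.rpow_pos_of_pos ht0 δ
  have hinv : t ^ (-δ) = (t ^ δ)⁻¹ := Real.rpow_neg ht0.le δ
  have hinv1 : (t ^ δ) * (t ^ δ)⁻¹ = 1 := mul_inv_cancel₀ hs.ne'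
  have hkey : δ * (1 - t) ≤ t ^ (-δ) - 1 := by
    rw [hinv]
    nlinarith [sq_nonneg (t ^ δ - 1), sq_nonneg ((t ^ δ)⁻¹ - 1), hs]
  have hvd : 0 < v ^ (-δ) := Real.rpow_pos_of_pos hv0 _
  have hut : u = v * t := by rw [htdef]; field_simp
  have h3 : u ^ (-δ) = v ^ (-δ) * t ^ (-δ) := by
    rw [hut, Real.mul_rpow hv0.le ht0.le]
  have h4 : v ^ (-δ) * (δ * (1 - t)) ≤ u ^ (-δ) - v ^ (-δ) := by
    have := mul_le_mul_of_nonneg_left hkey hvd.le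
    rw [h3]; nlinarith
  have h5 : v ^ (1+δ) = v * v ^ δ := by rw [Real.rpow_add hv0, Real.rpow_one]
  have hvp : 0 < v ^ δ := Real.rpow_pos_of_pos hv0 _
  have h6 : (v - u) / v ^ (1+δ) = (1 - t) * v ^ (-δ) := by
    rw [hut, h5, Real.rpow_neg hv0.le]
    field_simp
  rw [h6, one_div]
  rw [le_inv_mul_iff₀ hδ0]
  nlinarith

/-- Abel–Dini: convergence part. -/
lemma AD_conv {a : ℕ → ℝ} (ha : ∀ n, 0 ≤ a n) {δ : ℝ} (hδ0 : 0 < δ) (hδ1 : δ ≤ 1) :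
    Summable (fun n => a n / (1 + ∑ i ∈ Finset.range (n+1), a i) ^ (1 + δ)) := by
  set S : ℕ → ℝ := fun n => ∑ i ∈ Finset.range n, a i with hS
  have hS0 : ∀ n, 0 ≤ S n := fun n => Finset.sum_nonneg (fun i _ => ha i)
  have hb1 : ∀ n, 1 ≤ 1 + S n := fun n => le_add_of_nonneg_right (hS0 n)
  have hstep : ∀ n, 1 + S (n+1) = (1 + S n) + a n := by
    intro n; rw [hS]; simp [Finset.sum_range_succ]; ring
  have hb : ∀ n, a n / (1 + S (n+1)) ^ ((1:ℝ)+δ) ≤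
      (1/δ) * ((1 + S n) ^ (-δ) - (1 + S (n+1)) ^ (-δ)) := by
    intro n
    have h := key1 (u := 1 + S n) (v := 1 + S (n+1)) (hb1 n)
      (by rw [hstep n]; linarith [ha n]) hδ0 hδ1
    rw [hstep n, add_sub_cancel_left] at h
    rw [hstep n]
    exact h
  have htel : Summable (fun n => (1/δ) * ((1 + S n) ^ (-δ) - (1 + S (n+1)) ^ (-δ))) := by
    apply Summable.mul_left
    apply summable_of_sum_range_le (c := (1 + S 0) ^ (-δ))
    · intro n
      have h1 : (1 + S (n+1)) ^ (-δ) ≤ (1 + S n) ^ (-δ) :=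
        Real.rpow_le_rpow_of_nonpos (lt_of_lt_of_le one_pos (hb1 n))
          (by rw [hstep n]; linarith [ha n]) (by linarith)
      linarith
    · intro n
      rw [Finset.sum_range_sub' (f := fun i => (1 + S i) ^ (-δ))]
      have h2 : 0 ≤ (1 + S n) ^ (-δ) := Real.rpow_nonneg (by linarith [hb1 n]) _
      linarith
  refine Summable.of_nonneg_of_le (fun n => ?_) hb htel
  exact div_nonneg (ha n) (Real.rpow_nonneg (by linarith [hb1 (n+1)]) _)

/-- Abel–Dini: divergence part. -/
lemma AD_div {a : ℕ → ℝ} (ha : ∀ n, 0 ≤ a n) (hna : ¬ Summable a) {β : ℝ}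
    (hβ0 : 0 < β) (hβ1 : β ≤ 1) :
    ¬ Summable (fun n => a n / (1 + ∑ i ∈ Finset.range (n+1), a i) ^ β) := by
  intro hsum
  set S : ℕ → ℝ := fun n => ∑ i ∈ Finset.range n, a i with hS
  set b : ℕ → ℝ := fun n => 1 + S n with hbdef
  have hS0 : ∀ n, 0 ≤ S n := fun n => Finset.sum_nonneg (fun i _ => ha i)
  have hb1 : ∀ n, 1 ≤ b n := fun n => le_add_of_nonneg_right (hS0 n)
  have hb0 : ∀ n, (0:ℝ) < b n := fun n => lt_of_lt_of_le one_pos (hb1 n)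
  have hmono : Monotone b := by
    intro m n hmn
    exact add_le_add_right (Finset.sum_le_sum_of_subset_of_nonneg
      (Finset.range_subset_range.2 hmn) (fun i _ _ => ha i)) 1
  have h1 : Summable (fun n => a n / b (n+1)) := by
    refine Summable.of_nonneg_of_le (fun n => div_nonneg (ha n) (hb0 (n+1)).le)
      (fun n => ?_) hsum
    have hbb : b (n+1) ^ β ≤ b (n+1) := by
      calc b (n+1) ^ β ≤ b (n+1) ^ (1:ℝ) :=
            Real.rpow_le_rpow_of_exponent_le (hb1 _) hβ1
        _ = b (n+1) := Real.rpow_one _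
    have hpos : 0 < b (n+1) ^ β := Real.rpow_pos_of_pos (hb0 _) _
    exact div_le_div_of_nonneg_left (ha n) hpos hbb
  have htends : Tendsto S atTop atTop :=
    (not_summable_iff_tendsto_nat_atTop_of_nonneg ha).1 hna
  have hbt : Tendsto b atTop atTop := tendsto_atTop_add_const_left _ 1 htends
  obtain ⟨N, hN⟩ : ∃ N, ∑' k, a (k + N) / b (k + N + 1) < 1/2 := by
    have ht := tendsto_sum_nat_add (f := fun n => a n / b (n+1))
    have := (ht.eventually (gt_mem_nhds (by norm_num : (0:ℝ) < 1/2))).exists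
    obtain ⟨N, hN⟩ := this
    exact ⟨N, hN⟩
  obtain ⟨M, hMN, hM⟩ : ∃ M, N ≤ M ∧ 2 * b N ≤ b M := by
    obtain ⟨M, h1', h2'⟩ := ((hbt.eventually_ge_atTop (2 * b N)).and
      (eventually_ge_atTop N)).exists
    exact ⟨M, h2', h1'⟩
  have htel : ∑ i ∈ Finset.range (M - N), a (N + i) = S M - S N := by
    have h := Finset.sum_range_sub (f := fun i => S (N + i)) (n := M - N)
    have h2 : ∀ i, S (N + i + 1) - S (N + i) = a (N + i) := by
      intro i; rw [hS]; simp [Finset.sum_range_succ]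
    calc ∑ i ∈ Finset.range (M - N), a (N + i)
        = ∑ i ∈ Finset.range (M - N), (S (N + (i+1)) - S (N + i)) := by
          apply Finset.sum_congr rfl; intro i _
          rw [← h2 i]; ring_nf
      _ = S (N + (M - N)) - S (N + 0) := h
      _ = S M - S N := by rw [Nat.add_sub_cancel' hMN, Nat.add_zero]
  have hge : (b M - b N) / b M ≤ ∑ i ∈ Finset.range (M - N), a (i + N) / b (i + N + 1) := by
    have hbMN : b M - b N = ∑ i ∈ Finset.range (M - N), a (N + i) := by
      rw [htel, hbdef]; ring
    calc (b M - b N) / b M = ∑ i ∈ Finset.range (M - N), a (N + i) / b M := by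
          rw [hbMN, Finset.sum_div]
      _ ≤ ∑ i ∈ Finset.range (M - N), a (i + N) / b (i + N + 1) := by
          apply Finset.sum_le_sum; intro i hi
          rw [Nat.add_comm N i]
          apply div_le_div_of_nonneg_left (ha _) (hb0 _)
          apply hmono
          have := Finset.mem_range.1 hi
          omega
  have hle : ∑ i ∈ Finset.range (M - N), a (i + N) / b (i + N + 1)
      ≤ ∑' k, a (k + N) / b (k + N + 1) := by
    apply Summable.sum_le_tsum
    · intro i _; exact div_nonneg (ha _) (hb0 _).le
    · exact (summable_nat_add_iff N).2 h1
  clear_value S b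
  have hhalf : (1:ℝ)/2 ≤ (b M - b N) / b M := by
    rw [le_div_iff₀ (hb0 M)]; nlinarith [hM, hb0 M, hb0 N]
  linarith [hge.trans hle]


/-- pointwise Young inequality -/
lemma young_pt {P Q R : ℝ} (hP : 0 < P) (hQ : 0 < Q) (hR : 0 < R)
    (hPQR : 1/P + 1/Q = 1/R) (s t : ℝ) :
    |s * t| ^ R ≤ (R/Q) * |s| ^ Q + (R/P) * |t| ^ P := by
  have hw : R/Q + R/P = 1 := by
    have h : R * (1/P + 1/Q) = R * (1/R) := by rw [hPQR]
    rw [mul_one_div, div_self hR.ne'] at h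
    rw [← h]; ring
  have h1 : |s * t| ^ R = (|s| ^ Q) ^ (R/Q) * (|t| ^ P) ^ (R/P) := by
    rw [abs_mul, Real.mul_rpow (abs_nonneg _) (abs_nonneg _),
      ← Real.rpow_mul (abs_nonneg s), ← Real.rpow_mul (abs_nonneg t),
      mul_div_cancel₀ _ hQ.ne', mul_div_cancel₀ _ hP.ne']
  rw [h1]
  exact Real.geom_mean_le_arith_mean2_weighted (div_nonneg hR.le hQ.le)
    (div_nonneg hR.le hP.le) (Real.rpow_nonneg (abs_nonneg _) _)
    (Real.rpow_nonneg (abs_nonneg _) _) hw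

lemma young_summable {P Q R : ℝ} (hP : 0 < P) (hQ : 0 < Q) (hR : 0 < R)
    (hPQR : 1/P + 1/Q = 1/R) {x y : ℕ → ℝ}
    (hx : Summable fun n => |x n| ^ Q) (hy : Summable fun n => |y n| ^ P) :
    Summable (fun n => |x n * y n| ^ R) := by
  refine Summable.of_nonneg_of_le (fun n => Real.rpow_nonneg (abs_nonneg _) _)
    (fun n => young_pt hP hQ hR hPQR (x n) (y n)) ?_
  exact (hx.mul_left _).add (hy.mul_left _)

lemma young_tsum {P Q R : ℝ} (hP : 0 < P) (hQ : 0 < Q) (hR : 0 < R)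
    (hPQR : 1/P + 1/Q = 1/R) {x y : ℕ → ℝ}
    (hx : Summable fun n => |x n| ^ Q) (hy : Summable fun n => |y n| ^ P)
    (hx1 : (∑' n, |x n| ^ Q) ≤ 1) (hy1 : (∑' n, |y n| ^ P) ≤ 1) :
    (∑' n, |x n * y n| ^ R) ≤ 1 := by
  have hw : R/Q + R/P = 1 := by
    have h : R * (1/P + 1/Q) = R * (1/R) := by rw [hPQR]
    rw [mul_one_div, div_self hR.ne'] at h
    rw [← h]; ring
  have h1 : (∑' n, |x n * y n| ^ R) ≤ ∑' n, ((R/Q) * |x n| ^ Q + (R/P) * |y n| ^ P) := by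
    apply Summable.tsum_le_tsum (fun n => young_pt hP hQ hR hPQR (x n) (y n))
      (young_summable hP hQ hR hPQR hx hy)
    exact (hx.mul_left _).add (hy.mul_left _)
  have h2 : ∑' n, ((R/Q) * |x n| ^ Q + (R/P) * |y n| ^ P)
      = (R/Q) * (∑' n, |x n| ^ Q) + (R/P) * (∑' n, |y n| ^ P) := by
    rw [Summable.tsum_add (hx.mul_left _) (hy.mul_left _), tsum_mul_left, tsum_mul_left]
  have hRQ : 0 ≤ R/Q := div_nonneg hR.le hQ.le
  have hRP : 0 ≤ R/P := div_nonneg hR.le hP.le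
  calc (∑' n, |x n * y n| ^ R) ≤ (R/Q) * (∑' n, |x n| ^ Q) + (R/P) * (∑' n, |y n| ^ P) := by
        rw [← h2]; exact h1
    _ ≤ (R/Q) * 1 + (R/P) * 1 := by
        have := mul_le_mul_of_nonneg_left hx1 hRQ
        have := mul_le_mul_of_nonneg_left hy1 hRP
        linarith
    _ = 1 := by rw [mul_one, mul_one, hw]

end Aux

namespace Aux
open Paper

lemma memLp_fin {p : ℝ≥0∞} (hp : p ≠ ∞) {x : ℕ → ℝ} :
    MemLp p x ↔ Summable (fun n => |x n| ^ p.toReal) := by simp [MemLp, hp]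

lemma memLp_inf {x : ℕ → ℝ} :
    MemLp ∞ x ↔ BddAbove (Set.range fun n => |x n|) := by simp [MemLp]

lemma lpNrm_fin {p : ℝ≥0∞} (hp : p ≠ ∞) (x : ℕ → ℝ) :
    lpNrm p x = (∑' n, |x n| ^ p.toReal) ^ (1/p.toReal) := by simp [lpNrm, hp]

lemma lpNrm_inf (x : ℕ → ℝ) : lpNrm ∞ x = ⨆ n, |x n| := by simp [lpNrm]

lemma toReal_pos {p : ℝ≥0∞} (h1 : 1 ≤ p) (hp : p ≠ ∞) : 0 < p.toReal := by
  apply ENNReal.toReal_pos _ hp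
  intro h0; rw [h0] at h1; simp at h1

lemma one_le_toReal {p : ℝ≥0∞} (h1 : 1 ≤ p) (hp : p ≠ ∞) : 1 ≤ p.toReal := by
  have := ENNReal.toReal_mono hp h1
  simpa using this

lemma memLp_zero_iff {p : ℝ≥0∞} (h1 : 1 ≤ p) {x : ℕ → ℝ} (hx : ∀ n, x n = 0) :
    MemLp p x := by
  by_cases hp : p = ∞
  · subst hp; rw [memLp_inf]
    exact ⟨0, by rintro v ⟨n, rfl⟩; simp [hx n]⟩
  · rw [memLp_fin hp]
    have : (fun n => |x n| ^ p.toReal) = fun _ => (0:ℝ) := by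
      funext n; rw [hx n, abs_zero, Real.zero_rpow (toReal_pos h1 hp).ne']
    rw [this]; exact summable_zero

lemma lpNrm_zero {p : ℝ≥0∞} (h1 : 1 ≤ p) {x : ℕ → ℝ} (hx : ∀ n, x n = 0) :
    lpNrm p x = 0 := by
  by_cases hp : p = ∞
  · subst hp; rw [lpNrm_inf]
    have : (fun n => |x n|) = fun _ : ℕ => (0:ℝ) := by funext n; rw [hx n, abs_zero]
    rw [this, ciSup_const]
  · rw [lpNrm_fin hp]
    have : (fun n => |x n| ^ p.toReal) = fun _ : ℕ => (0:ℝ) := by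
      funext n; rw [hx n, abs_zero, Real.zero_rpow (toReal_pos h1 hp).ne']
    rw [this, tsum_zero, Real.zero_rpow (one_div_ne_zero (toReal_pos h1 hp).ne')]

lemma lpNrm_nonneg (p : ℝ≥0∞) (x : ℕ → ℝ) : 0 ≤ lpNrm p x := by
  by_cases hp : p = ∞
  · subst hp; rw [lpNrm_inf]; exact Real.iSup_nonneg (fun n => abs_nonneg _)
  · rw [lpNrm_fin hp]
    exact Real.rpow_nonneg (tsum_nonneg (fun n => Real.rpow_nonneg (abs_nonneg _) _)) _

/-- from summability of `|y|^P`, `|y n| → 0`. -/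
lemma tendsto_abs_of_summable {P : ℝ} (hP : 0 < P) {y : ℕ → ℝ}
    (hy : Summable fun n => |y n| ^ P) : Tendsto (fun n => |y n|) atTop (𝓝 0) := by
  have h0 := hy.tendsto_atTop_zero
  have h2 := h0.rpow_const (p := P⁻¹) (Or.inr (inv_nonneg.2 hP.le))
  rw [Real.zero_rpow (inv_ne_zero hP.ne')] at h2
  refine h2.congr fun n => ?_
  rw [← Real.rpow_mul (abs_nonneg _), mul_inv_cancel₀ hP.ne', Real.rpow_one]

/-- monotonicity of the norm under pointwise domination. -/
lemma lpNrm_mono {r : ℝ≥0∞} (hr1 : 1 ≤ r) {z x : ℕ → ℝ} (h : ∀ n, |z n| ≤ |x n|)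
    (hx : MemLp r x) : lpNrm r z ≤ lpNrm r x := by
  by_cases hr : r = ∞
  · subst hr; rw [lpNrm_inf, lpNrm_inf]
    rw [memLp_inf] at hx
    exact Real.iSup_le (fun n => (h n).trans (le_ciSup hx n))
      (Real.iSup_nonneg (fun n => abs_nonneg _))
  · rw [lpNrm_fin hr, lpNrm_fin hr]
    rw [memLp_fin hr] at hx
    have hR : 0 < r.toReal := toReal_pos hr1 hr
    apply Real.rpow_le_rpow (tsum_nonneg (fun n => Real.rpow_nonneg (abs_nonneg _) _))
      _ (by positivity)
    apply Summable.tsum_le_tsum _ _ hx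
    · exact fun n => Real.rpow_le_rpow (abs_nonneg _) (h n) hR.le
    · refine Summable.of_nonneg_of_le (fun n => Real.rpow_nonneg (abs_nonneg _) _)
        (fun n => Real.rpow_le_rpow (abs_nonneg _) (h n) hR.le) hx

/-- membership transfer under domination, `p ≤ r`. -/
lemma memLp_of_le {M : ℝ} (hM : 0 ≤ M) {z y : ℕ → ℝ} (h : ∀ n, |z n| ≤ M * |y n|)
    {p r : ℝ≥0∞} (hp1 : 1 ≤ p) (hpr : p ≤ r) (hy : MemLp p y) : MemLp r z := by
  by_cases hp : p = ∞
  · have hr : r = ∞ := top_le_iff.1 (hp ▸ hpr)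
    subst hr; rw [memLp_inf]; rw [hp, memLp_inf] at hy
    obtain ⟨B, hB⟩ := hy
    refine ⟨M * B, ?_⟩
    rintro v ⟨n, rfl⟩
    exact (h n).trans (mul_le_mul_of_nonneg_left (hB ⟨n, rfl⟩) hM)
  · have hP : 0 < p.toReal := toReal_pos hp1 hp
    rw [memLp_fin hp] at hy
    have hy0 : Tendsto (fun n => |y n|) atTop (𝓝 0) := tendsto_abs_of_summable hP hy
    by_cases hr : r = ∞
    · subst hr; rw [memLp_inf]
      have hz0 : Tendsto (fun n => M * |y n|) atTop (𝓝 (M * 0)) := hy0.const_mul M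
      obtain ⟨B, hB⟩ := hz0.bddAbove_range
      refine ⟨B, ?_⟩
      rintro v ⟨n, rfl⟩
      exact (h n).trans (hB ⟨n, rfl⟩)
    · rw [memLp_fin hr]
      have hR : 0 < r.toReal := toReal_pos (hp1.trans hpr) hr
      have hPR : p.toReal ≤ r.toReal := ENNReal.toReal_mono hr hpr
      obtain ⟨N, hN⟩ := eventually_atTop.1 (hy0.eventually (gt_mem_nhds one_pos))
      rw [← summable_nat_add_iff N]
      refine Summable.of_nonneg_of_le (fun n => Real.rpow_nonneg (abs_nonneg _) _)
        (fun n => ?_) (((summable_nat_add_iff N).2 hy).mul_left (M ^ r.toReal))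
      have h1 : |z (n+N)| ≤ M * |y (n+N)| := h _
      have h2 : |z (n+N)| ^ r.toReal ≤ (M * |y (n+N)|) ^ r.toReal :=
        Real.rpow_le_rpow (abs_nonneg _) h1 hR.le
      rw [Real.mul_rpow hM (abs_nonneg _)] at h2
      refine h2.trans ?_
      apply mul_le_mul_of_nonneg_left _ (Real.rpow_nonneg hM _)
      rcases eq_or_lt_of_le (abs_nonneg (y (n+N))) with he | hpos
      · rw [← he, Real.zero_rpow hR.ne', Real.zero_rpow hP.ne']
      · exact Real.rpow_le_rpow_of_exponent_ge hpos (le_of_lt (hN (n+N) (Nat.le_add_left N n))) hPR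

end Aux

namespace Aux
open Paper

/-- If `x` is unbounded then it is not a multiplier from `ℓ_p` to `ℓ_r`. -/
lemma exists_bad_y {x : ℕ → ℝ} (hx : ¬ BddAbove (Set.range fun n => |x n|))
    {p r : ℝ≥0∞} (hp1 : 1 ≤ p) (hr1 : 1 ≤ r) :
    ∃ y, MemLp p y ∧ ¬ MemLp r (pmul x y) := by
  classical
  have hex : ∀ B : ℝ, ∃ n, B < |x n| := by
    intro B
    rcases not_bddAbove_iff.1 hx B with ⟨v, ⟨n, rfl⟩, h⟩
    exact ⟨n, h⟩
  choose g hg using hex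
  let seq : ℕ → ℕ := fun k => Nat.rec (g 1) (fun k nk => g (|x nk| + 4^(k+1))) k
  have hseq0 : 1 < |x (seq 0)| := hg 1
  have hseqS : ∀ k, |x (seq k)| + 4^(k+1) < |x (seq (k+1))| := fun k => hg _
  have hmono : StrictMono (fun k => |x (seq k)|) := by
    apply strictMono_nat_of_lt_succ
    intro k
    have h4 : (0:ℝ) < 4^(k+1) := by positivity
    linarith [hseqS k]
  have hinj : Function.Injective seq := by
    intro a b h
    exact hmono.injective (by rw [h])
  have hlow : ∀ k, (4:ℝ)^k ≤ |x (seq k)| := by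
    intro k
    induction k with
    | zero => simpa using hseq0.le
    | succ n _ =>
      have h1 := hseqS n
      have h2 := abs_nonneg (x (seq n))
      linarith
  set y : ℕ → ℝ := Function.extend seq (fun k => (2:ℝ)⁻¹ ^ k) (fun _ => 0) with hydef
  have hy_app : ∀ k, y (seq k) = (2:ℝ)⁻¹ ^ k := fun k => hinj.extend_apply _ _ k
  have hy_zero : ∀ n, (¬ ∃ k, seq k = n) → y n = 0 := fun n h =>
    Function.extend_apply' _ _ _ h
  have hy_nonneg : ∀ n, 0 ≤ y n := by
    intro n
    rcases Classical.em (∃ k, seq k = n) with h | h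
    · obtain ⟨k, rfl⟩ := h; rw [hy_app]; positivity
    · rw [hy_zero n h]
  have hy_le_one : ∀ n, y n ≤ 1 := by
    intro n
    rcases Classical.em (∃ k, seq k = n) with h | h
    · obtain ⟨k, rfl⟩ := h; rw [hy_app]
      exact pow_le_one₀ (by norm_num) (by norm_num)
    · rw [hy_zero n h]; norm_num
  refine ⟨y, ?_, ?_⟩
  · by_cases hp : p = ∞
    · subst hp; rw [memLp_inf]
      refine ⟨1, ?_⟩
      rintro v ⟨n, rfl⟩
      show |y n| ≤ 1
      rw [abs_of_nonneg (hy_nonneg n)]; exact hy_le_one n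
    · rw [memLp_fin hp]
      have hP : 0 < p.toReal := toReal_pos hp1 hp
      apply (Function.Injective.summable_iff hinj ?_).1
      · have heq : ((fun n => |y n| ^ p.toReal) ∘ seq) = fun k => ((2:ℝ)⁻¹ ^ p.toReal) ^ k := by
          funext k
          simp only [Function.comp_apply]
          rw [hy_app, abs_of_nonneg (by positivity),
            ← Real.rpow_natCast ((2:ℝ)⁻¹) k, ← Real.rpow_mul (by norm_num),
            mul_comm, Real.rpow_mul (by norm_num), Real.rpow_natCast]
        rw [heq]
        exact summable_geometric_of_lt_one (by positivity)
          (Real.rpow_lt_one (by norm_num) (by norm_num) hP)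
      · intro n hn
        rw [hy_zero n (by simpa using hn), abs_zero, Real.zero_rpow hP.ne']
  · have hub : ¬ BddAbove (Set.range fun n => |pmul x y n|) := by
      rintro ⟨B, hB⟩
      obtain ⟨k, hk⟩ := pow_unbounded_of_one_lt B (by norm_num : (1:ℝ) < 2)
      have h1 : |pmul x y (seq k)| ≤ B := hB ⟨seq k, rfl⟩
      have h2 : (2:ℝ)^k ≤ |pmul x y (seq k)| := by
        show (2:ℝ)^k ≤ |x (seq k) * y (seq k)|
        rw [abs_mul, hy_app, abs_of_nonneg (by positivity : (0:ℝ) ≤ (2:ℝ)⁻¹ ^ k)]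
        calc (2:ℝ)^k = 4^k * 2⁻¹^k := by
              rw [← mul_pow]; norm_num
          _ ≤ |x (seq k)| * 2⁻¹ ^ k :=
              mul_le_mul_of_nonneg_right (hlow k) (by positivity)
      linarith
    by_cases hr : r = ∞
    · subst hr; rw [memLp_inf]; exact hub
    · rw [memLp_fin hr]
      intro hsum
      have hR : 0 < r.toReal := toReal_pos hr1 hr
      exact hub (tendsto_abs_of_summable hR hsum).bddAbove_range

/-- The standard basis vector. -/
def e (n0 : ℕ) : ℕ → ℝ := fun n => if n = n0 then 1 else 0

lemma memLp_e {p : ℝ≥0∞} (hp1 : 1 ≤ p) (n0 : ℕ) : MemLp p (e n0) := by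
  by_cases hp : p = ∞
  · subst hp; rw [memLp_inf]
    refine ⟨1, ?_⟩
    rintro v ⟨n, rfl⟩
    by_cases h : n = n0 <;> simp [e, h]
  · rw [memLp_fin hp]
    apply summable_of_ne_finset_zero (s := {n0})
    intro n hn
    simp only [Finset.mem_singleton] at hn
    simp [e, hn, Real.zero_rpow (toReal_pos hp1 hp).ne']

lemma lpNrm_e {p : ℝ≥0∞} (hp1 : 1 ≤ p) (n0 : ℕ) : lpNrm p (e n0) = 1 := by
  by_cases hp : p = ∞
  · subst hp; rw [lpNrm_inf]
    apply le_antisymm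
    · apply Real.iSup_le _ zero_le_one
      intro n; by_cases h : n = n0 <;> simp [e, h]
    · have hb : BddAbove (Set.range fun n => |e n0 n|) := by
        rw [← memLp_inf]; exact memLp_e hp1 n0
      have := le_ciSup hb n0
      simpa [e] using this
  · rw [lpNrm_fin hp]
    have hP : 0 < p.toReal := toReal_pos hp1 hp
    have heq : (fun n => |e n0 n| ^ p.toReal) = fun n => if n = n0 then (1:ℝ) else 0 := by
      funext n
      by_cases h : n = n0 <;> simp [e, h, Real.zero_rpow hP.ne']
    rw [heq, tsum_ite_eq, Real.one_rpow]

lemma lpNrm_pmul_e {r : ℝ≥0∞} (hr1 : 1 ≤ r) (x : ℕ → ℝ) (n0 : ℕ) :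
    lpNrm r (pmul x (e n0)) = |x n0| ∧ MemLp r (pmul x (e n0)) := by
  have habs : ∀ n, |pmul x (e n0) n| = if n = n0 then |x n0| else 0 := by
    intro n
    by_cases h : n = n0 <;> simp [pmul, e, h]
  constructor
  · by_cases hr : r = ∞
    · subst hr; rw [lpNrm_inf]
      apply le_antisymm
      · apply Real.iSup_le _ (abs_nonneg _)
        intro n; show |pmul x (e n0) n| ≤ |x n0|
        rw [habs n]; by_cases h : n = n0 <;> simp [h]
      · have hb : BddAbove (Set.range fun n => |pmul x (e n0) n|) := by
          refine ⟨|x n0|, ?_⟩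
          rintro v ⟨n, rfl⟩
          show |pmul x (e n0) n| ≤ |x n0|
          rw [habs n]; by_cases h : n = n0 <;> simp [h]
        have := le_ciSup hb n0
        rwa [habs n0, if_pos rfl] at this
    · rw [lpNrm_fin hr]
      have hR : 0 < r.toReal := toReal_pos hr1 hr
      have heq : (fun n => |pmul x (e n0) n| ^ r.toReal)
          = fun n => if n = n0 then |x n0| ^ r.toReal else 0 := by
        funext n
        rw [habs n]
        by_cases h : n = n0 <;> simp [h, Real.zero_rpow hR.ne']
      rw [heq, tsum_ite_eq, ← Real.rpow_mul (abs_nonneg _), mul_one_div,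
        div_self hR.ne', Real.rpow_one]
  · by_cases hr : r = ∞
    · subst hr; rw [memLp_inf]
      refine ⟨|x n0|, ?_⟩
      rintro v ⟨n, rfl⟩
      show |pmul x (e n0) n| ≤ |x n0|
      rw [habs n]; by_cases h : n = n0 <;> simp [h]
    · rw [memLp_fin hr]
      apply summable_of_ne_finset_zero (s := {n0})
      intro n hn
      simp only [Finset.mem_singleton] at hn
      rw [habs n, if_neg hn, Real.zero_rpow (toReal_pos hr1 hr).ne']

end Aux

namespace Aux
open Paper

lemma zero_lp {p : ℝ≥0∞} (hp1 : 1 ≤ p) : (0:ℕ→ℝ) ∈ lpSet p :=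
  memLp_zero_iff hp1 (fun _ => rfl)

lemma mulNrm_nonempty {p r : ℝ≥0∞} (hp1 : 1 ≤ p) (x : ℕ → ℝ) :
    {c | ∃ y ∈ lpSet p, lpNrm p y ≤ 1 ∧ c = lpNrm r (pmul x y)}.Nonempty := by
  refine ⟨lpNrm r (pmul x 0), 0, zero_lp hp1, ?_, rfl⟩
  have h0 : lpNrm p (0:ℕ→ℝ) = 0 := lpNrm_zero (x := (0:ℕ→ℝ)) hp1 (fun _ => rfl)
  rw [h0]
  norm_num

lemma mulNrm_le {p r : ℝ≥0∞} (hp1 : 1 ≤ p) (x : ℕ → ℝ) {A : ℝ}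
    (hA : ∀ y, MemLp p y → lpNrm p y ≤ 1 → lpNrm r (pmul x y) ≤ A) :
    mulNrm (lpSet p) (lpNrm p) (lpNrm r) x ≤ A := by
  unfold mulNrm
  apply csSup_le (mulNrm_nonempty hp1 x)
  rintro c ⟨y, hy, hy1, rfl⟩
  exact hA y hy hy1

lemma le_mulNrm {p r : ℝ≥0∞} (x : ℕ → ℝ) {A : ℝ}
    (hA : ∀ y, MemLp p y → lpNrm p y ≤ 1 → lpNrm r (pmul x y) ≤ A)
    (y : ℕ → ℝ) (hy : MemLp p y) (hy1 : lpNrm p y ≤ 1) :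
    lpNrm r (pmul x y) ≤ mulNrm (lpSet p) (lpNrm p) (lpNrm r) x := by
  unfold mulNrm
  apply le_csSup
  · refine ⟨A, ?_⟩
    rintro c ⟨y', hy', hy1', rfl⟩
    exact hA y' hy' hy1'
  · exact ⟨y, hy, hy1, rfl⟩

lemma tsum_le_one {P : ℝ} (hP : 0 < P) {y : ℕ → ℝ}
    (h : (∑' n, |y n| ^ P) ^ (1/P) ≤ 1) : (∑' n, |y n| ^ P) ≤ 1 := by
  by_contra hlt
  push_neg at hlt
  have h2 : (1:ℝ) < (∑' n, |y n| ^ P) ^ (1/P) :=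
    (Real.one_lt_rpow_iff_of_pos (lt_trans one_pos hlt)).2 (Or.inl ⟨hlt, by positivity⟩)
  linarith

lemma lpNrm_const_mul {p : ℝ≥0∞} (hp1 : 1 ≤ p) (hp : p ≠ ∞) {c : ℝ} (hc : 0 ≤ c)
    (y : ℕ → ℝ) : lpNrm p (fun n => c * y n) = c * lpNrm p y := by
  rw [lpNrm_fin hp, lpNrm_fin hp]
  have hP : 0 < p.toReal := toReal_pos hp1 hp
  have h1 : (fun n => |c * y n| ^ p.toReal) = fun n => c ^ p.toReal * |y n| ^ p.toReal := by
    funext n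
    rw [abs_mul, abs_of_nonneg hc, Real.mul_rpow hc (abs_nonneg _)]
  rw [h1, tsum_mul_left, Real.mul_rpow (by positivity)
    (tsum_nonneg (fun n => Real.rpow_nonneg (abs_nonneg _) _)),
    ← Real.rpow_mul hc, mul_one_div, div_self hP.ne', Real.rpow_one]

/-- Case `p = ∞`, `q = r`. -/
lemma caseA {r : ℝ≥0∞} (hr1 : 1 ≤ r) :
    mulSet (lpSet ∞) (lpSet r) = lpSet r ∧
    ∀ x ∈ lpSet r, lpNrm r x ≤ mulNrm (lpSet ∞) (lpNrm ∞) (lpNrm r) x ∧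
      mulNrm (lpSet ∞) (lpNrm ∞) (lpNrm r) x ≤ lpNrm r x := by
  have hone : MemLp ∞ (fun _ : ℕ => (1:ℝ)) := by
    rw [memLp_inf]
    exact ⟨1, by rintro v ⟨n, rfl⟩; simp⟩
  have hone_nrm : lpNrm ∞ (fun _ : ℕ => (1:ℝ)) = 1 := by
    rw [lpNrm_inf]
    simp [ciSup_const]
  have hpm1 : ∀ x : ℕ → ℝ, pmul x (fun _ => (1:ℝ)) = x := by
    intro x; funext n; simp [pmul]
  have hupper : ∀ x, MemLp r x → ∀ y, MemLp ∞ y → lpNrm ∞ y ≤ 1 →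
      lpNrm r (pmul x y) ≤ lpNrm r x := by
    intro x hx y hy hy1
    apply lpNrm_mono hr1 _ hx
    intro n
    have hyB : BddAbove (Set.range fun n => |y n|) := memLp_inf.1 hy
    have hyb : |y n| ≤ 1 := le_trans (le_ciSup hyB n)
      (le_trans (le_of_eq (lpNrm_inf y).symm) hy1)
    show |x n * y n| ≤ |x n|
    calc |x n * y n| = |x n| * |y n| := abs_mul _ _
      _ ≤ |x n| * 1 := mul_le_mul_of_nonneg_left hyb (abs_nonneg _)
      _ = |x n| := mul_one _
  constructor
  · apply Set.Subset.antisymm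
    · intro x hx
      have := hx (fun _ => (1:ℝ)) hone
      rwa [hpm1 x] at this
    · intro x hx y hy
      have hyB : BddAbove (Set.range fun n => |y n|) := memLp_inf.1 hy
      set B : ℝ := max (⨆ n, |y n|) 0 with hB
      have hB0 : 0 ≤ B := le_max_right _ _
      refine memLp_of_le hB0 (fun n => ?_) hr1 (le_refl r) hx
      show |x n * y n| ≤ B * |x n|
      calc |x n * y n| = |y n| * |x n| := by rw [abs_mul (x n) (y n)]; ring
        _ ≤ B * |x n| := by
            apply mul_le_mul_of_nonneg_right _ (abs_nonneg _)
            exact le_trans (le_ciSup hyB n) (le_max_left _ _)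
  · intro x hx
    constructor
    · have := le_mulNrm (p := ∞) (r := r) x (hupper x hx) (fun _ => (1:ℝ)) hone
        (le_of_eq hone_nrm)
      rwa [hpm1 x] at this
    · exact mulNrm_le (le_top) x (hupper x hx)

/-- Case `q = ∞`, `r = p`, `p` finite. -/
lemma caseB {p : ℝ≥0∞} (hp1 : 1 ≤ p) (hp : p ≠ ∞) :
    mulSet (lpSet p) (lpSet p) = lpSet ∞ ∧
    ∀ x ∈ lpSet ∞, lpNrm ∞ x ≤ mulNrm (lpSet p) (lpNrm p) (lpNrm p) x ∧
      mulNrm (lpSet p) (lpNrm p) (lpNrm p) x ≤ lpNrm ∞ x := by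
  have hupper : ∀ x, MemLp ∞ x → ∀ y, MemLp p y → lpNrm p y ≤ 1 →
      lpNrm p (pmul x y) ≤ lpNrm ∞ x := by
    intro x hx y hy hy1
    have hxB : BddAbove (Set.range fun n => |x n|) := memLp_inf.1 hx
    set A : ℝ := ⨆ n, |x n| with hA
    have hA0 : 0 ≤ A := Real.iSup_nonneg (fun n => abs_nonneg _)
    have hdom : ∀ n, |pmul x y n| ≤ |A * y n| := by
      intro n
      show |x n * y n| ≤ |A * y n|
      rw [abs_mul, abs_mul, abs_of_nonneg hA0]
      exact mul_le_mul_of_nonneg_right (le_ciSup hxB n) (abs_nonneg _)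
    have hmem : MemLp p (fun n => A * y n) := by
      rw [memLp_fin hp] at hy ⊢
      have h1 : (fun n => |A * y n| ^ p.toReal)
          = fun n => A ^ p.toReal * |y n| ^ p.toReal := by
        funext n
        rw [abs_mul, abs_of_nonneg hA0, Real.mul_rpow hA0 (abs_nonneg _)]
      rw [h1]; exact hy.mul_left _
    calc lpNrm p (pmul x y) ≤ lpNrm p (fun n => A * y n) := lpNrm_mono (r := p) hp1 hdom hmem
      _ = A * lpNrm p y := lpNrm_const_mul hp1 hp hA0 y
      _ ≤ A * 1 := mul_le_mul_of_nonneg_left hy1 hA0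
      _ = lpNrm ∞ x := by rw [mul_one, lpNrm_inf]
  constructor
  · apply Set.Subset.antisymm
    · intro x hx
      by_contra hub
      have hub' : ¬ BddAbove (Set.range fun n => |x n|) := fun hb => hub (memLp_inf.2 hb)
      obtain ⟨y, hy, hbad⟩ := exists_bad_y hub' hp1 hp1 (r := p)
      exact hbad (hx y hy)
    · intro x hx y hy
      have hxB : BddAbove (Set.range fun n => |x n|) := memLp_inf.1 hx
      set A : ℝ := ⨆ n, |x n| with hA
      have hA0 : 0 ≤ A := Real.iSup_nonneg (fun n => abs_nonneg _)
      refine memLp_of_le hA0 (fun n => ?_) hp1 (le_refl p) hy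
      show |x n * y n| ≤ A * |y n|
      rw [abs_mul]
      exact mul_le_mul_of_nonneg_right (le_ciSup hxB n) (abs_nonneg _)
  · intro x hx
    have hxB : BddAbove (Set.range fun n => |x n|) := memLp_inf.1 hx
    constructor
    · rw [lpNrm_inf]
      by_contra hlt
      push_neg at hlt
      obtain ⟨n0, hn0⟩ := exists_lt_of_lt_ciSup hlt
      have h1 := le_mulNrm (p := p) (r := p) x (hupper x hx) (e n0) (memLp_e hp1 n0)
        (le_of_eq (lpNrm_e hp1 n0))
      rw [(lpNrm_pmul_e hp1 x n0).1] at h1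
      linarith
    · exact mulNrm_le hp1 x (hupper x hx)

end Aux

namespace Aux
open Paper

set_option maxHeartbeats 1000000 in
/-- Case all finite: `1 ≤ r < p < ∞`, `1/p + 1/q = 1/r`. -/
lemma caseC {p q r : ℝ≥0∞} (hr1 : 1 ≤ r) (hq1 : 1 ≤ q) (hp1 : 1 ≤ p)
    (hp : p ≠ ∞) (hq : q ≠ ∞) (hr : r ≠ ∞)
    (key : 1/p.toReal + 1/q.toReal = 1/r.toReal) :
    mulSet (lpSet p) (lpSet r) = lpSet q ∧
    ∀ x ∈ lpSet q, lpNrm q x ≤ mulNrm (lpSet p) (lpNrm p) (lpNrm r) x ∧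
      mulNrm (lpSet p) (lpNrm p) (lpNrm r) x ≤ lpNrm q x := by
  set P := p.toReal with hPdef
  set Q := q.toReal with hQdef
  set R := r.toReal with hRdef
  have hP : 0 < P := toReal_pos hp1 hp
  have hQ : 0 < Q := toReal_pos hq1 hq
  have hR : 0 < R := toReal_pos hr1 hr
  have hw : R/Q + R/P = 1 := by
    have h : R * (1/P + 1/Q) = R * (1/R) := by rw [key]
    rw [mul_one_div, div_self hR.ne'] at h
    rw [← h]; ring
  have hid : (1 + Q/P) * R = Q := by
    field_simp at hw ⊢
    nlinarith [hw]
  -- upper bound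
  have hupper : ∀ x, MemLp q x → ∀ y, MemLp p y → lpNrm p y ≤ 1 →
      lpNrm r (pmul x y) ≤ lpNrm q x := by
    intro x hx y hy hy1
    rw [memLp_fin hq] at hx
    rw [memLp_fin hp] at hy
    rw [lpNrm_fin hp] at hy1
    set T := ∑' n, |x n| ^ Q with hT
    have hT0 : 0 ≤ T := tsum_nonneg (fun n => Real.rpow_nonneg (abs_nonneg _) _)
    have hyP : (∑' n, |y n| ^ P) ≤ 1 := tsum_le_one hP hy1
    rcases eq_or_lt_of_le hT0 with hTz | hTpos
    · -- x = 0
      have hx0 : ∀ n, x n = 0 := by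
        intro n
        have h1 : |x n| ^ Q ≤ 0 := by
          have := Summable.le_tsum hx n (fun j _ => Real.rpow_nonneg (abs_nonneg _) _)
          rw [← hT, ← hTz] at this
          exact this
        have h2 : |x n| = 0 := by
          by_contra hne
          have hpos : 0 < |x n| := lt_of_le_of_ne (abs_nonneg _) (Ne.symm hne)
          exact absurd h1 (not_le.2 (Real.rpow_pos_of_pos hpos _))
        exact abs_eq_zero.1 h2
      have hz : lpNrm r (pmul x y) = 0 :=
        lpNrm_zero hr1 (fun n => by show x n * y n = 0; rw [hx0 n, zero_mul])
      rw [hz]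
      exact lpNrm_nonneg q x
    · set c := T ^ (1/Q) with hc
      have hc0 : 0 < c := Real.rpow_pos_of_pos hTpos _
      set u : ℕ → ℝ := fun n => x n / c with hu
      have huQ : ∀ n, |u n| ^ Q = |x n| ^ Q / T := by
        intro n
        rw [hu]
        show |x n / c| ^ Q = |x n| ^ Q / T
        rw [abs_div, abs_of_pos hc0, Real.div_rpow (abs_nonneg _) hc0.le, hc,
          ← Real.rpow_mul hT0, one_div_mul_cancel hQ.ne', Real.rpow_one]
      have hu_s : Summable (fun n => |u n| ^ Q) := by
        simp only [huQ]; exact hx.div_const T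
      have hu_t : (∑' n, |u n| ^ Q) ≤ 1 := by
        simp only [huQ]
        rw [tsum_div_const, div_self hTpos.ne']
      have hxy_t := young_tsum hP hQ hR key hu_s hy hu_t hyP
      have hxy_s := young_summable hP hQ hR key hu_s hy
      have hxeq : ∀ n, |x n * y n| ^ R = c ^ R * |u n * y n| ^ R := by
        intro n
        have : x n = c * u n := by rw [hu]; field_simp
        rw [this, mul_assoc, abs_mul, abs_of_pos hc0,
          Real.mul_rpow hc0.le (abs_nonneg _)]
      rw [lpNrm_fin hr, lpNrm_fin hq, ← hT, ← hc]
      have h1 : (∑' n, |pmul x y n| ^ R) = c ^ R * ∑' n, |u n * y n| ^ R := by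
        rw [show (fun n => |pmul x y n| ^ R) = fun n => c ^ R * |u n * y n| ^ R from
          funext (fun n => hxeq n), tsum_mul_left]
      rw [h1]
      calc (c ^ R * ∑' n, |u n * y n| ^ R) ^ (1/R)
          ≤ (c ^ R * 1) ^ (1/R) := by
            apply Real.rpow_le_rpow
              (mul_nonneg (by positivity)
                (tsum_nonneg (fun n => Real.rpow_nonneg (abs_nonneg _) _)))
              (mul_le_mul_of_nonneg_left hxy_t (by positivity)) (by positivity)
        _ = c := by
            rw [mul_one, ← Real.rpow_mul hc0.le, mul_one_div, div_self hR.ne',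
              Real.rpow_one]
  constructor
  · apply Set.Subset.antisymm
    · -- multiplier ⊆ lq : Abel–Dini construction
      intro x hx
      show MemLp q x
      rw [memLp_fin hq]
      by_contra hna
      set a : ℕ → ℝ := fun n => |x n| ^ Q with ha
      have ha0 : ∀ n, 0 ≤ a n := fun n => Real.rpow_nonneg (abs_nonneg _) _
      have hPR : 1/P < 1/R := by
        rw [← key]
        have : 0 < 1/Q := by positivity
        linarith
      set α := min ((1/P + 1/R)/2) (3/(2*P)) with hα
      have hα_gtP : 1/P < α := by
        apply lt_min (by linarith)
        rw [div_lt_div_iff₀ hP (by positivity)]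
        nlinarith
      have hα_ltR : α < 1/R := lt_of_le_of_lt (min_le_left _ _) (by linarith)
      have hα0 : 0 < α := lt_trans (by positivity) hα_gtP
      set δ := α * P - 1 with hδ
      have hδ0 : 0 < δ := by
        have h1 : 1 < α * P := by
          rw [div_lt_iff₀ hP] at hα_gtP
          linarith
        simp only [hδ]; linarith
      have hδ1 : δ ≤ 1 := by
        have h2 : α * P ≤ 3/(2*P) * P := mul_le_mul_of_nonneg_right (min_le_right _ _) hP.le
        have h3 : 3/(2*P) * P = 3/2 := by field_simp
        simp only [hδ]; rw [h3] at h2; linarith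
      set β := α * R with hβ
      have hβ0 : 0 < β := by positivity
      have hβ1 : β ≤ 1 := by
        rw [lt_div_iff₀ hR] at hα_ltR
        simp only [hβ]; linarith
      set B : ℕ → ℝ := fun n => 1 + ∑ i ∈ Finset.range (n+1), a i with hB
      have hB1 : ∀ n, 1 ≤ B n := fun n =>
        le_add_of_nonneg_right (Finset.sum_nonneg (fun i _ => ha0 i))
      have hB0 : ∀ n, 0 < B n := fun n => lt_of_lt_of_le one_pos (hB1 n)
      set y : ℕ → ℝ := fun n => |x n| ^ (Q/P) / B n ^ α with hy
      have hy0 : ∀ n, 0 ≤ y n := fun n =>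
        div_nonneg (Real.rpow_nonneg (abs_nonneg _) _) (Real.rpow_nonneg (hB0 n).le _)
      have heqP : (fun n => |y n| ^ P) = fun n => a n / B n ^ (1 + δ) := by
        funext n
        rw [abs_of_nonneg (hy0 n)]
        show (|x n| ^ (Q/P) / B n ^ α) ^ P = a n / B n ^ (1 + δ)
        rw [Real.div_rpow (Real.rpow_nonneg (abs_nonneg _) _) (Real.rpow_nonneg (hB0 n).le _),
          ← Real.rpow_mul (abs_nonneg _), div_mul_cancel₀ _ hP.ne',
          ← Real.rpow_mul (hB0 n).le]
        have : α * P = 1 + δ := by simp only [hδ]; ring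
        rw [this, ha]
      have hy_mem : MemLp p y := by
        rw [memLp_fin hp, heqP]
        exact AD_conv ha0 hδ0 hδ1
      have hxy := hx y hy_mem
      have hxy' : Summable (fun n => |pmul x y n| ^ R) := (memLp_fin hr).1 hxy
      have heqR : (fun n => |pmul x y n| ^ R) = fun n => a n / B n ^ β := by
        funext n
        show |x n * y n| ^ R = a n / B n ^ β
        have h1 : |x n * y n| = |x n| ^ (1 + Q/P) / B n ^ α := by
          rw [abs_mul, abs_of_nonneg (hy0 n), hy]
          show |x n| * (|x n| ^ (Q/P) / B n ^ α) = |x n| ^ (1 + Q/P) / B n ^ α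
          rw [Real.rpow_add' (abs_nonneg _) (by positivity), Real.rpow_one]
          ring
        rw [h1, Real.div_rpow (Real.rpow_nonneg (abs_nonneg _) _)
          (Real.rpow_nonneg (hB0 n).le _), ← Real.rpow_mul (abs_nonneg _), hid,
          ← Real.rpow_mul (hB0 n).le, ha, hβ]
      rw [heqR] at hxy'
      exact AD_div ha0 hna hβ0 hβ1 hxy'
    · -- lq ⊆ multiplier : Young
      intro x hx y hy
      show MemLp r (pmul x y)
      rw [memLp_fin hr]
      exact young_summable hP hQ hR key ((memLp_fin hq).1 hx) ((memLp_fin hp).1 hy)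
  · -- norms
    intro x hx
    have hxs : Summable (fun n => |x n| ^ Q) := (memLp_fin hq).1 hx
    refine ⟨?_, mulNrm_le hp1 x (hupper x hx)⟩
    set T := ∑' n, |x n| ^ Q with hT
    have hT0 : 0 ≤ T := tsum_nonneg (fun n => Real.rpow_nonneg (abs_nonneg _) _)
    rcases eq_or_lt_of_le hT0 with hTz | hTpos
    · -- x = 0 : norm is 0
      have hq0 : lpNrm q x = 0 := by
        rw [lpNrm_fin hq, ← hT, ← hTz, Real.zero_rpow (by positivity : (1:ℝ)/Q ≠ 0)]
      rw [hq0]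
      have h0 := le_mulNrm (p := p) (r := r) x (hupper x hx) 0 (zero_lp hp1)
        (by rw [lpNrm_zero (x := (0:ℕ→ℝ)) hp1 (fun _ => rfl)]; norm_num)
      refine le_trans (le_of_eq ?_) h0
      exact (lpNrm_zero hr1 (fun n => by show x n * (0:ℕ→ℝ) n = 0; simp)).symm
    · -- witness y0
      set d := T ^ (1/P) with hd
      have hd0 : 0 < d := Real.rpow_pos_of_pos hTpos _
      set y0 : ℕ → ℝ := fun n => |x n| ^ (Q/P) / d with hy0def
      have hy00 : ∀ n, 0 ≤ y0 n :=
        fun n => div_nonneg (Real.rpow_nonneg (abs_nonneg _) _) hd0.le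
      have heqP : (fun n => |y0 n| ^ P) = fun n => |x n| ^ Q / T := by
        funext n
        rw [abs_of_nonneg (hy00 n)]
        show (|x n| ^ (Q/P) / d) ^ P = |x n| ^ Q / T
        rw [Real.div_rpow (Real.rpow_nonneg (abs_nonneg _) _) hd0.le,
          ← Real.rpow_mul (abs_nonneg _), div_mul_cancel₀ _ hP.ne', hd,
          ← Real.rpow_mul hT0, one_div_mul_cancel hP.ne', Real.rpow_one]
      have hy0_mem : MemLp p y0 := by
        rw [memLp_fin hp, heqP]
        exact hxs.div_const T
      have hy0_nrm : lpNrm p y0 = 1 := by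
        rw [lpNrm_fin hp, heqP, tsum_div_const, div_self hTpos.ne', Real.one_rpow]
      have heqR : (fun n => |pmul x y0 n| ^ R) = fun n => |x n| ^ Q / T ^ (R/P) := by
        funext n
        show |x n * y0 n| ^ R = |x n| ^ Q / T ^ (R/P)
        have h1 : |x n * y0 n| = |x n| ^ (1 + Q/P) / d := by
          rw [abs_mul, abs_of_nonneg (hy00 n), hy0def]
          show |x n| * (|x n| ^ (Q/P) / d) = |x n| ^ (1 + Q/P) / d
          rw [Real.rpow_add' (abs_nonneg _) (by positivity), Real.rpow_one]
          ring
        rw [h1, Real.div_rpow (Real.rpow_nonneg (abs_nonneg _) _) hd0.le,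
          ← Real.rpow_mul (abs_nonneg _), hid]
        congr 1
        rw [hd, ← Real.rpow_mul hT0]
        congr 1
        ring
      have hval : lpNrm r (pmul x y0) = lpNrm q x := by
        rw [lpNrm_fin hr, lpNrm_fin hq, heqR, tsum_div_const, ← hT]
        have h2 : T / T ^ (R/P) = T ^ (R/Q) := by
          rw [show R/Q = 1 - R/P by linarith [hw], Real.rpow_sub hTpos, Real.rpow_one]
        rw [h2, ← Real.rpow_mul hT0]
        congr 1
        field_simp
        rw [← hQdef, ← hRdef]
        ring_nf
        rw [mul_inv_cancel₀ hR.ne', mul_inv_cancel₀ hQ.ne']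
      have hfin := le_mulNrm (p := p) (r := r) x (hupper x hx) y0 hy0_mem
        (le_of_eq hy0_nrm)
      rwa [hval] at hfin

end Aux

/-- If `1 ≤ r ≤ p ≤ ∞` and `1/p + 1/q = 1/r`, then `ℓ_p^{ℓ_r} = ℓ_q` with
equivalent norms; if `1 ≤ p < r ≤ ∞`, then `ℓ_p^{ℓ_r} = ℓ_∞`. -/
theorem stmt6 :
    (∀ p q r : ℝ≥0∞, 1 ≤ r → r ≤ p → p⁻¹ + q⁻¹ = r⁻¹ →
      Paper.mulSet (Paper.lpSet p) (Paper.lpSet r) = Paper.lpSet q ∧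
      ∃ c C : ℝ, 0 < c ∧ 0 < C ∧ ∀ x ∈ Paper.lpSet q,
        c * Paper.lpNrm q x ≤
            Paper.mulNrm (Paper.lpSet p) (Paper.lpNrm p) (Paper.lpNrm r) x ∧
        Paper.mulNrm (Paper.lpSet p) (Paper.lpNrm p) (Paper.lpNrm r) x ≤
            C * Paper.lpNrm q x) ∧
    (∀ p r : ℝ≥0∞, 1 ≤ p → p < r →
      Paper.mulSet (Paper.lpSet p) (Paper.lpSet r) = Paper.lpSet ∞) := by
  constructor
  · intro p q r hr1 hrp hpqr
    have hp1 : 1 ≤ p := le_trans hr1 hrp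
    have hp0 : p ≠ 0 := by intro h; rw [h] at hp1; simp at hp1
    have hr0 : r ≠ 0 := by intro h; rw [h] at hr1; simp at hr1
    by_cases hp : p = ∞
    · -- q = r
      have hq : q = r := by
        have h0 : q⁻¹ = r⁻¹ := by rw [hp] at hpqr; simpa using hpqr
        have h1 := congrArg (·⁻¹) h0
        simpa using h1
      subst hq hp
      obtain ⟨hset, hnrm⟩ := Aux.caseA hr1
      refine ⟨hset, 1, 1, one_pos, one_pos, fun x hx => ?_⟩
      rw [one_mul]
      exact hnrm x hx
    · have hr : r ≠ ∞ := by
        intro h; rw [h] at hrp; exact hp (top_le_iff.1 hrp)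
      by_cases hq : q = ∞
      · -- r = p
        have hrp' : r = p := by
          have h0 : p⁻¹ = r⁻¹ := by rw [hq] at hpqr; simpa using hpqr
          have h1 := congrArg (·⁻¹) h0
          simpa using h1.symm
        subst hrp' hq
        obtain ⟨hset, hnrm⟩ := Aux.caseB hp1 hp
        refine ⟨hset, 1, 1, one_pos, one_pos, fun x hx => ?_⟩
        rw [one_mul]
        exact hnrm x hx
      · have hq1 : 1 ≤ q := by
          have h1 : q⁻¹ ≤ r⁻¹ := by rw [← hpqr]; exact le_add_self
          have h2 : r⁻¹ ≤ 1 := ENNReal.inv_le_one.2 hr1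
          exact ENNReal.inv_le_one.1 (le_trans h1 h2)
        have hq0 : q ≠ 0 := by intro h; rw [h] at hq1; simp at hq1
        have hkey : 1/p.toReal + 1/q.toReal = 1/r.toReal := by
          have h := congrArg ENNReal.toReal hpqr
          rw [ENNReal.toReal_add (by simp [hp0]) (by simp [hq0]),
            ENNReal.toReal_inv, ENNReal.toReal_inv, ENNReal.toReal_inv] at h
          simpa [one_div] using h
        obtain ⟨hset, hnrm⟩ := Aux.caseC hr1 hq1 hp1 hp hq hr hkey
        refine ⟨hset, 1, 1, one_pos, one_pos, fun x hx => ?_⟩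
        rw [one_mul]
        exact hnrm x hx
  · intro p r hp1 hpr
    have hr1 : 1 ≤ r := le_trans hp1 hpr.le
    have hp : p ≠ ∞ := (hpr.trans_le le_top).ne
    apply Set.Subset.antisymm
    · intro x hx
      show Paper.MemLp ∞ x
      by_contra hub
      have hub' : ¬ BddAbove (Set.range fun n => |x n|) := fun hb => hub (Aux.memLp_inf.2 hb)
      obtain ⟨y, hy, hbad⟩ := Aux.exists_bad_y hub' hp1 hr1 (r := r)
      exact hbad (hx y hy)
    · intro x hx y hy
      have hxB : BddAbove (Set.range fun n => |x n|) := Aux.memLp_inf.1 hx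
      have hA0 : 0 ≤ ⨆ n, |x n| := Real.iSup_nonneg (fun n => abs_nonneg _)
      refine Aux.memLp_of_le hA0 (fun n => ?_) hp1 hpr.le hy
      show |x n * y n| ≤ (⨆ n, |x n|) * |y n|
      rw [abs_mul]
      exact mul_le_mul_of_nonneg_right (le_ciSup hxB n) (abs_nonneg _)
end

section
/- If E and F are symmetric sequence spaces and F has a Fatou norm, then for every bounded operator A: E → F given by an infinite matrix, ‖A‖_{B(E,F)} = ‖A^T‖_{B(F^×,E^×)}, where A^T is the transposed matrix. -/
open Filter Topology
open scoped ENNReal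

namespace Paper
noncomputable section

/-- standard basis sequence -/
def sgl (j : ℕ) : ℕ → ℝ := fun m => if m = j then 1 else 0

variable {E F : SymmSeqSpace}

lemma nrm_zero (E : SymmSeqSpace) : E.nrm 0 = 0 := by
  have h := E.nrm_smul 0 0
  simpa using h

lemma nrm_abs {x : ℕ → ℝ} (hx : x ∈ E.carrier) :
    (fun n => |x n|) ∈ E.carrier ∧ E.nrm (fun n => |x n|) = E.nrm x := by
  have h1 := E.solid (fun n => |x n|) x (fun n => by simp) hx
  exact ⟨h1.1, le_antisymm h1.2 (E.solid x (fun n => |x n|) (fun n => by simp) h1.1).2⟩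

lemma sgl_mem (E : SymmSeqSpace) (hE : ∃ z ∈ E.carrier, z ≠ 0) (j : ℕ) :
    sgl j ∈ E.carrier ∧ E.nrm (sgl j) = 1 := by
  obtain ⟨z, hz, hz0⟩ := hE
  obtain ⟨n, hn⟩ : ∃ n, z n ≠ 0 := by
    by_contra h; push_neg at h; exact hz0 (funext h)
  have hf : (z n • sgl n) ∈ E.carrier := by
    refine (E.solid _ z (fun m => ?_) hz).1
    by_cases hm : m = n <;> simp [sgl, Pi.smul_apply, hm]
  have hsn : sgl n ∈ E.carrier := by
    have := E.smul_mem (z n)⁻¹ _ hf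
    have he : (z n)⁻¹ • (z n • sgl n) = sgl n := by
      rw [smul_smul, inv_mul_cancel₀ hn, one_smul]
    rwa [he] at this
  have hmem : ∀ i, sgl i ∈ E.carrier := by
    intro i
    have h := E.symm (Equiv.swap n i) (sgl n) hsn
    have he : (sgl n) ∘ (Equiv.swap n i) = sgl i := by
      funext m
      rcases eq_or_ne m i with rfl | hmi
      · simp [sgl, Equiv.swap_apply_right]
      rcases eq_or_ne m n with rfl | hmn
      · simp [sgl, Equiv.swap_apply_left, Ne.symm hmi, hmi]
      · simp [sgl, Equiv.swap_apply_of_ne_of_ne hmn hmi, hmn, hmi]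
    rw [he] at h; exact h.1
  refine ⟨hmem j, ?_⟩
  have h := E.symm (Equiv.swap 0 j) (sgl 0) (hmem 0)
  have he : (sgl 0) ∘ (Equiv.swap 0 j) = sgl j := by
    funext m
    rcases eq_or_ne m j with rfl | hmj
    · simp [sgl, Equiv.swap_apply_right]
    rcases eq_or_ne m 0 with rfl | hm0
    · simp [sgl, Equiv.swap_apply_left, Ne.symm hmj, hmj]
    · simp [sgl, Equiv.swap_apply_of_ne_of_ne hm0 hmj, hm0, hmj]
  rw [he] at h
  rw [h.2]
  have : sgl 0 = (fun n => if n = 0 then (1:ℝ) else 0) := rfl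
  rw [this, E.nrm_unit]

lemma eval_le_nrm (hE : ∃ z ∈ E.carrier, z ≠ 0) {x : ℕ → ℝ}
    (hx : x ∈ E.carrier) (m : ℕ) : |x m| ≤ E.nrm x := by
  have hs := sgl_mem E hE m
  have h := E.solid (x m • sgl m) x (fun k => by
    by_cases hk : k = m <;> simp [sgl, Pi.smul_apply, hk]) hx
  calc |x m| = E.nrm (x m • sgl m) := by rw [E.nrm_smul, hs.2, mul_one]
  _ ≤ E.nrm x := h.2

lemma sum_mem_nrm (E : SymmSeqSpace) {ι : Type*} (s : Finset ι) (v : ι → ℕ → ℝ)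
    (hv : ∀ k ∈ s, v k ∈ E.carrier) :
    (∑ k ∈ s, v k) ∈ E.carrier ∧ E.nrm (∑ k ∈ s, v k) ≤ ∑ k ∈ s, E.nrm (v k) := by
  classical
  induction s using Finset.cons_induction with
  | empty => simpa using ⟨E.zero_mem, le_of_eq (nrm_zero E)⟩
  | cons a s ha ih =>
    have hva := hv a (Finset.mem_cons_self a s)
    have ih' := ih (fun k hk => hv k (Finset.mem_cons_of_mem hk))
    rw [Finset.sum_cons, Finset.sum_cons]
    exact ⟨E.add_mem _ hva _ ih'.1,
      le_trans (E.nrm_add _ hva _ ih'.1) (by linarith [ih'.2])⟩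


lemma pair_le_nrm (F : SymmSeqSpace) {y v : ℕ → ℝ}
    (hB : BddAbove {c | ∃ x ∈ F.carrier, F.nrm x ≤ 1 ∧ c = ∑' n, |x n * y n|})
    (hNy : kDualNrm F.carrier F.nrm y ≤ 1) (hv : v ∈ F.carrier) :
    (∑' n, |v n * y n|) ≤ F.nrm v := by
  set t := F.nrm v with ht
  rcases eq_or_lt_of_le (F.nrm_nonneg v) with h0 | h0
  · have hv0 : v = 0 := (F.nrm_eq_zero_iff v hv).1 h0.symm
    have hz : (∑' n, |v n * y n|) = 0 := by simp [hv0]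
    rw [hz]; exact h0.le
  · set u := t⁻¹ • v with hu_def
    have hu : u ∈ F.carrier := F.smul_mem _ _ hv
    have hnu : F.nrm u ≤ 1 := by
      rw [hu_def, F.nrm_smul, abs_of_pos (inv_pos.2 h0), inv_mul_cancel₀ (ne_of_gt h0)]
    have h1 : (∑' n, |u n * y n|) ≤ 1 :=
      le_trans (le_csSup hB ⟨u, hu, hnu, rfl⟩) hNy
    have he : ∀ n, |v n * y n| = t * |u n * y n| := by
      intro n
      have hun : u n = t⁻¹ * v n := rfl
      have habs : |u n * y n| = t⁻¹ * |v n * y n| := by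
        rw [hun, show t⁻¹ * v n * y n = t⁻¹ * (v n * y n) by ring, abs_mul,
          abs_of_pos (inv_pos.2 h0)]
      rw [habs, ← mul_assoc, mul_inv_cancel₀ (ne_of_gt h0), one_mul]
    calc ∑' n, |v n * y n| = ∑' n, t * |u n * y n| := tsum_congr he
    _ = t * ∑' n, |u n * y n| := tsum_mul_left
    _ ≤ t * 1 := mul_le_mul_of_nonneg_left h1 (le_of_lt h0)
    _ = t := mul_one t

lemma dual_set_bdd (F : SymmSeqSpace) (hF0 : ∃ z ∈ F.carrier, z ≠ 0) {y : ℕ → ℝ}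
    (hy : y ∈ kDual F.carrier) :
    BddAbove {c | ∃ x ∈ F.carrier, F.nrm x ≤ 1 ∧ c = ∑' n, |x n * y n|} := by
  by_contra hB
  have hch : ∀ k : ℕ, ∃ x ∈ F.carrier, F.nrm x ≤ 1 ∧ (k:ℝ) * 2^k < ∑' n, |x n * y n| := by
    intro k
    rcases not_bddAbove_iff.1 hB ((k:ℝ) * 2^k) with ⟨c, ⟨x, hx, hn1, rfl⟩, hc⟩
    exact ⟨x, hx, hn1, hc⟩
  choose x hxF hx1 hxs using hch
  set v : ℕ → ℕ → ℝ := fun k => (2:ℝ)⁻¹^k • (fun m => |x k m|) with hv_def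
  have hvmem : ∀ k, v k ∈ F.carrier := fun k => F.smul_mem _ _ (nrm_abs (hxF k)).1
  have hvnrm : ∀ k, F.nrm (v k) ≤ (2:ℝ)⁻¹^k := by
    intro k
    rw [hv_def]
    simp only
    rw [F.nrm_smul, (nrm_abs (hxF k)).2, abs_of_nonneg (by positivity)]
    nlinarith [pow_pos (by norm_num : (0:ℝ) < 2⁻¹) k, hx1 k, F.nrm_nonneg (x k),
      pow_nonneg (by norm_num : (0:ℝ) ≤ 2⁻¹) k]
  set u : ℕ → ℕ → ℝ := fun n => ∑ k ∈ Finset.range (n+1), v k with hu_def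
  have humem : ∀ n, u n ∈ F.carrier := fun n =>
    (sum_mem_nrm F _ _ (fun k _ => hvmem k)).1
  -- tail bound
  have htail : ∀ k m : ℕ, k ≤ m → F.nrm (u m - u k) ≤ (2:ℝ)⁻¹^k := by
    intro k m hkm
    have hsum := Finset.sum_range_add_sum_Ico v (by omega : k+1 ≤ m+1)
    have hsum' : u k + ∑ j ∈ Finset.Ico (k+1) (m+1), v j = u m := hsum
    have hdiff : u m - u k = ∑ j ∈ Finset.Ico (k+1) (m+1), v j := by
      rw [← hsum']; abel
    rw [hdiff]
    refine le_trans (sum_mem_nrm F _ _ (fun j _ => hvmem j)).2 ?_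
    calc ∑ j ∈ Finset.Ico (k+1) (m+1), F.nrm (v j)
        ≤ ∑ j ∈ Finset.Ico (k+1) (m+1), (2:ℝ)⁻¹^j :=
          Finset.sum_le_sum (fun j _ => hvnrm j)
    _ = ∑ i ∈ Finset.range (m+1-(k+1)), (2:ℝ)⁻¹^(k+1+i) := by
          rw [Finset.sum_Ico_eq_sum_range]
    _ = (2:ℝ)⁻¹^(k+1) * ∑ i ∈ Finset.range (m+1-(k+1)), (2:ℝ)⁻¹^i := by
          rw [Finset.mul_sum]; exact Finset.sum_congr rfl (fun i _ => pow_add _ _ _)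
    _ ≤ (2:ℝ)⁻¹^(k+1) * 2 := by
          refine mul_le_mul_of_nonneg_left ?_ (by positivity)
          have := sum_geometric_two_le (m+1-(k+1))
          simpa [one_div] using this
    _ = (2:ℝ)⁻¹^k := by rw [pow_succ]; ring
  -- Cauchy
  have hcauchy : ∀ ε : ℝ, 0 < ε → ∃ N, ∀ m ≥ N, ∀ k ≥ N, F.nrm (u m - u k) < ε := by
    intro ε hε
    obtain ⟨N, hN⟩ := exists_pow_lt_of_lt_one hε (by norm_num : (2:ℝ)⁻¹ < 1)
    refine ⟨N, fun m hm k hk => ?_⟩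
    rcases le_total k m with h | h
    · refine lt_of_le_of_lt (le_trans (htail k m h) ?_) hN
      exact pow_le_pow_of_le_one (by norm_num) (by norm_num) hk
    · have : u m - u k = (-1 : ℝ) • (u k - u m) := by rw [neg_one_smul]; abel
      rw [this, F.nrm_smul]
      simp only [abs_neg, abs_one, one_mul]
      refine lt_of_le_of_lt (le_trans (htail m k h) ?_) hN
      exact pow_le_pow_of_le_one (by norm_num) (by norm_num) hm
  obtain ⟨xi, hxi, htend⟩ := F.complete u humem hcauchy
  -- pointwise convergence
  have hpt : ∀ m, Tendsto (fun n => u n m) atTop (nhds (xi m)) := by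
    intro m
    rw [tendsto_iff_dist_tendsto_zero]
    refine squeeze_zero (fun n => dist_nonneg) (fun n => ?_) htend
    rw [Real.dist_eq]
    have hmem : u n - xi ∈ F.carrier := by
      have := F.add_mem _ (humem n) _ (F.smul_mem (-1) _ hxi)
      rwa [show u n + (-1:ℝ) • xi = u n - xi by rw [neg_one_smul]; abel] at this
    exact eval_le_nrm hF0 hmem m
  have hunn : ∀ n m, 0 ≤ u n m := by
    intro n m
    have h : u n m = ∑ k ∈ Finset.range (n+1), v k m := Finset.sum_apply m _ v
    rw [h]
    refine Finset.sum_nonneg (fun k _ => ?_)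
    have hvk : v k m = (2:ℝ)⁻¹^k * |x k m| := rfl
    rw [hvk]; positivity
  have hxinn : ∀ m, 0 ≤ xi m := fun m =>
    ge_of_tendsto (hpt m) (Eventually.of_forall (fun n => hunn n m))
  have hlb : ∀ k m, (2:ℝ)⁻¹^k * |x k m| ≤ xi m := by
    intro k m
    refine ge_of_tendsto (hpt m) ?_
    filter_upwards [eventually_ge_atTop k] with n hn
    have hk : k ∈ Finset.range (n+1) := Finset.mem_range.2 (by omega)
    have h : u n m = ∑ j ∈ Finset.range (n+1), v j m := Finset.sum_apply m _ v
    have h2 : v k m ≤ u n m := by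
      rw [h]
      refine Finset.single_le_sum (f := fun j => v j m) (fun j _ => ?_) hk
      have hvj : v j m = (2:ℝ)⁻¹^j * |x j m| := rfl
      have hpos : (0:ℝ) ≤ (2:ℝ)⁻¹^j * |x j m| := by positivity
      exact le_of_le_of_eq hpos hvj.symm
    exact h2
  have hsummable := hy.2 xi hxi
  have hcontr : ∀ k : ℕ, (k:ℝ) ≤ ∑' n, |xi n * y n| := by
    intro k
    have h1 : ∀ n, (2:ℝ)⁻¹^k * |x k n * y n| ≤ |xi n * y n| := by
      intro n
      rw [abs_mul, abs_mul, ← mul_assoc]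
      refine mul_le_mul_of_nonneg_right ?_ (abs_nonneg _)
      rw [abs_of_nonneg (hxinn n)]
      exact hlb k n
    have h2 : (2:ℝ)⁻¹^k * ∑' n, |x k n * y n| ≤ ∑' n, |xi n * y n| := by
      rw [← tsum_mul_left]
      exact Summable.tsum_le_tsum h1 (Summable.mul_left _ (hy.2 (x k) (hxF k))) hsummable
    have h3 : (k:ℝ) = (2:ℝ)⁻¹^k * ((k:ℝ) * 2^k) := by
      rw [show (2:ℝ)⁻¹^k * ((k:ℝ) * 2^k) = (k:ℝ) * ((2:ℝ)⁻¹ * 2)^k by rw [mul_pow]; ring]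
      norm_num
    rw [h3]
    refine le_trans ?_ h2
    exact mul_le_mul_of_nonneg_left (le_of_lt (hxs k)) (by positivity)
  obtain ⟨k, hk⟩ := exists_nat_gt (∑' n, |xi n * y n|)
  exact absurd (hcontr k) (not_le.2 hk)


/-- extension of a finite vector by zeros -/
def ext (n : ℕ) (a : Fin n → ℝ) : ℕ → ℝ := fun m => if h : m < n then a ⟨m, h⟩ else 0

lemma ext_add (n : ℕ) (a b : Fin n → ℝ) : ext n (a + b) = ext n a + ext n b := by
  funext m; simp only [ext, Pi.add_apply]
  by_cases h : m < n <;> simp [h]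

lemma ext_smul (n : ℕ) (c : ℝ) (a : Fin n → ℝ) : ext n (c • a) = c • ext n a := by
  funext m; simp only [ext, Pi.smul_apply, smul_eq_mul]
  by_cases h : m < n <;> simp [h]

lemma ext_neg (n : ℕ) (a : Fin n → ℝ) : ext n (-a) = (-1 : ℝ) • ext n a := by
  funext m; simp only [ext, Pi.neg_apply, Pi.smul_apply, smul_eq_mul]
  by_cases h : m < n <;> simp [h]

lemma ext_eq_sum (n : ℕ) (a : Fin n → ℝ) :
    ext n a = ∑ i : Fin n, a i • sgl (i : ℕ) := by
  funext m
  rw [Finset.sum_apply]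
  simp only [Pi.smul_apply, smul_eq_mul, sgl]
  by_cases h : m < n
  · rw [Finset.sum_eq_single ⟨m, h⟩]
    · simp [ext, h]
    · intro b _ hb
      rw [if_neg, mul_zero]
      intro hmb
      exact hb (by exact Fin.ext hmb.symm)
    · simp
  · rw [ext]; simp only [h, dif_neg, not_false_iff]
    refine (Finset.sum_eq_zero (fun i _ => ?_)).symm
    rw [if_neg, mul_zero]
    intro hmi
    exact h (hmi ▸ i.isLt)

lemma ext_mem (F : SymmSeqSpace) (hF0 : ∃ z ∈ F.carrier, z ≠ 0) (n : ℕ) (a : Fin n → ℝ) :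
    ext n a ∈ F.carrier := by
  rw [ext_eq_sum]
  exact (sum_mem_nrm F (Finset.univ : Finset (Fin n)) _
    (fun i _ => F.smul_mem _ _ (sgl_mem F hF0 (i : ℕ)).1)).1


/-- Type synonym carrying the `F`-norm on finitely supported vectors. -/
def Vty (_F : SymmSeqSpace) (n : ℕ) : Type := Fin n → ℝ

instance (F : SymmSeqSpace) (n : ℕ) : AddCommGroup (Vty F n) :=
  inferInstanceAs (AddCommGroup (Fin n → ℝ))
instance (F : SymmSeqSpace) (n : ℕ) : Module ℝ (Vty F n) :=
  inferInstanceAs (Module ℝ (Fin n → ℝ))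

lemma findim_dual (F : SymmSeqSpace) (hF0 : ∃ z ∈ F.carrier, z ≠ 0) (n : ℕ)
    (w : ℕ → ℝ) (hw : w ∈ F.carrier) (hwsupp : ∀ m, n ≤ m → w m = 0) (hwne : w ≠ 0) :
    ∃ Y : ℕ → ℝ, (∀ m, n ≤ m → Y m = 0) ∧
      (∀ v : ℕ → ℝ, v ∈ F.carrier → (∀ m, n ≤ m → v m = 0) →
        ∑ i ∈ Finset.range n, v i * Y i ≤ F.nrm v) ∧
      (∑ i ∈ Finset.range n, w i * Y i) = F.nrm w := by
  classical
  letI : NormedAddCommGroup (Vty F n) := AddGroupNorm.toNormedAddCommGroup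
    { toFun := fun a => F.nrm (ext n a)
      map_zero' := by
        have h0 : ext n (0 : Fin n → ℝ) = 0 := by
          funext m; simp [ext]
        beta_reduce
        rw [show ext n (0 : Vty F n) = 0 from h0, nrm_zero]
      add_le' := fun a b => by
        beta_reduce
        rw [show ext n (a + b) = ext n a + ext n b from ext_add n a b]
        exact F.nrm_add _ (ext_mem F hF0 n a) _ (ext_mem F hF0 n b)
      neg' := fun a => by
        beta_reduce
        rw [show ext n (-a) = (-1 : ℝ) • ext n a from ext_neg n a, F.nrm_smul]
        simp
      eq_zero_of_map_eq_zero' := fun a h => by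
        have h2 : ext n a = 0 :=
          (F.nrm_eq_zero_iff _ (ext_mem F hF0 n a)).1 h
        funext i
        have := congrFun h2 (i : ℕ)
        have h3 : a i = 0 := by simpa [ext, i.isLt] using this
        exact h3 }
  letI : NormedSpace ℝ (Vty F n) :=
    { norm_smul_le := fun c a => by
        have : ‖c • a‖ = F.nrm (ext n (c • a)) := rfl
        rw [this, show ext n (c • a) = c • ext n a from ext_smul n c a, F.nrm_smul]
        exact le_of_eq rfl }
  set a0 : Vty F n := fun i => w (i : ℕ) with ha0
  have hext : ext n a0 = w := by
    funext m
    by_cases h : m < n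
    · simp [ext, h, ha0]
    · simp only [ext, dif_neg h]
      exact (hwsupp m (by omega)).symm
  have ha0ne : a0 ≠ 0 := by
    intro hc
    apply hwne
    funext m
    by_cases h : m < n
    · have : a0 ⟨m, h⟩ = 0 := by rw [hc]; rfl
      exact this
    · exact hwsupp m (by omega)
  obtain ⟨g, hg1, hgw⟩ := exists_dual_vector ℝ a0 (norm_ne_zero_iff.2 ha0ne)
  set Y : ℕ → ℝ := fun m => if h : m < n then g (Pi.single (⟨m, h⟩ : Fin n) (1:ℝ)) else 0 with hY
  have hYsupp : ∀ m, n ≤ m → Y m = 0 := fun m hm => by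
    simp [hY, Nat.not_lt.2 hm]
  have hrep : ∀ b : Vty F n, g b = ∑ i : Fin n, b i * Y (i : ℕ) := by
    intro b
    have hb_pi : (b : Fin n → ℝ) = ∑ i : Fin n, b i • (Pi.single i (1:ℝ) : Fin n → ℝ) := by
      rw [show (∑ i : Fin n, b i • (Pi.single i (1:ℝ) : Fin n → ℝ)) =
          ∑ i : Fin n, (Pi.single i (b i) : Fin n → ℝ) from
        Finset.sum_congr rfl (fun i _ => by rw [← Pi.single_smul, smul_eq_mul, mul_one])]
      exact (Finset.univ_sum_single (b : Fin n → ℝ)).symm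
    calc g b = g (∑ i : Fin n, b i • (Pi.single i (1:ℝ) : Fin n → ℝ)) := congrArg g hb_pi
    _ = ∑ i : Fin n, g (b i • (Pi.single i (1:ℝ) : Fin n → ℝ)) :=
        map_sum g (fun i => b i • (Pi.single i (1:ℝ) : Fin n → ℝ)) Finset.univ
    _ = ∑ i : Fin n, b i * Y (i : ℕ) := by
        refine Finset.sum_congr rfl (fun i _ => ?_)
        rw [show g (b i • (Pi.single i (1:ℝ) : Fin n → ℝ)) = b i • g (Pi.single i (1:ℝ))
          from g.map_smul (b i) _, smul_eq_mul]
        congr 1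
        simp [hY, i.isLt]
  have hnrm_eq : ∀ b : Vty F n, ‖b‖ = F.nrm (ext n b) := fun b => rfl
  refine ⟨Y, hYsupp, ?_, ?_⟩
  · intro v hv hvsupp
    set b : Vty F n := fun i => v (i : ℕ) with hb
    have hextb : ext n b = v := by
      funext m
      by_cases h : m < n
      · simp [ext, h, hb]
      · simp only [ext, dif_neg h]
        exact (hvsupp m (by omega)).symm
    have h1 : ∑ i ∈ Finset.range n, v i * Y i = ∑ i : Fin n, b i * Y (i : ℕ) :=
      Finset.sum_range (fun i => v i * Y i)
    rw [h1, ← hrep b]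
    have h2 : |g b| ≤ ‖g‖ * ‖b‖ := by
      have := g.le_opNorm b
      rwa [Real.norm_eq_abs] at this
    have h3 : ‖b‖ = F.nrm v := by rw [hnrm_eq, hextb]
    calc g b ≤ |g b| := le_abs_self _
    _ ≤ ‖g‖ * ‖b‖ := h2
    _ = F.nrm v := by rw [hg1, one_mul, h3]
  · have h1 : ∑ i ∈ Finset.range n, w i * Y i = ∑ i : Fin n, a0 i * Y (i : ℕ) :=
      Finset.sum_range (fun i => w i * Y i)
    have hgw' : g a0 = ‖a0‖ := by exact_mod_cast hgw
    rw [h1, ← hrep a0, hgw', hnrm_eq, hext]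


lemma norming (F : SymmSeqSpace) (hF0 : ∃ z ∈ F.carrier, z ≠ 0) (hFat : HasFatouNorm F)
    {z : ℕ → ℝ} (hz : z ∈ F.carrier) {ε : ℝ} (hε : 0 < ε) :
    ∃ (Y : ℕ → ℝ) (n : ℕ), (∀ m, n ≤ m → Y m = 0) ∧ Y ∈ kDual F.carrier ∧
      kDualNrm F.carrier F.nrm Y ≤ 1 ∧
      F.nrm z - ε ≤ ∑ i ∈ Finset.range n, z i * Y i := by
  classical
  have hazmem : (fun m => |z m|) ∈ F.carrier := (nrm_abs hz).1
  set u : ℕ → ℕ → ℝ := fun n m => if m < n then |z m| else 0 with hu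
  have humem : ∀ n, u n ∈ F.carrier := fun n => (F.solid _ _ (fun m => by
    by_cases h : m < n <;> simp [hu, h, abs_nonneg]) hazmem).1
  have hmono : ∀ n m, u n m ≤ u (n+1) m := by
    intro n m
    by_cases h : m < n
    · simp [hu, h, Nat.lt_succ_of_lt h]
    · simp only [hu, if_neg h]
      by_cases h2 : m < n + 1 <;> simp [h2, abs_nonneg]
  have hnonneg : ∀ n m, 0 ≤ u n m := by
    intro n m
    by_cases h : m < n <;> simp [hu, h, abs_nonneg]
  have hpt : ∀ m, Tendsto (fun n => u n m) atTop (nhds |z m|) := by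
    intro m
    refine tendsto_atTop_of_eventually_const (i₀ := m+1) (fun n hn => ?_)
    simp [hu, show m < n by omega]
  have hT := hFat (fun m => |z m|) hazmem u humem hnonneg
    (fun n m => hmono n m) hpt
  rw [(nrm_abs hz).2] at hT
  have hev : ∀ᶠ n in atTop, F.nrm z - ε < F.nrm (u n) :=
    hT.eventually (eventually_gt_nhds (by linarith))
  obtain ⟨n, hn⟩ := hev.exists
  set w : ℕ → ℝ := fun m => if m < n then z m else 0 with hw
  have hwmem : w ∈ F.carrier := (F.solid _ z (fun m => by
    by_cases h : m < n <;> simp [hw, h, abs_nonneg]) hz).1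
  have hwsupp : ∀ m, n ≤ m → w m = 0 := fun m hm => by
    simp [hw, Nat.not_lt.2 hm]
  have huw : u n = fun m => |w m| := by
    funext m
    by_cases h : m < n <;> simp [hu, hw, h]
  have hnw : F.nrm w = F.nrm (u n) := by rw [huw, (nrm_abs hwmem).2]
  by_cases hw0 : w = 0
  · refine ⟨0, n, fun m _ => rfl, ?_, ?_, ?_⟩
    · exact ⟨⟨0, by rintro c ⟨m, rfl⟩; simp⟩, fun x hx => by simpa using summable_zero⟩
    · refine Real.sSup_le ?_ zero_le_one
      rintro c ⟨x, hx, h1, rfl⟩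
      simpa using zero_le_one
    · have : F.nrm (u n) = 0 := by rw [← hnw, hw0, nrm_zero]
      rw [this] at hn
      have : ∑ i ∈ Finset.range n, z i * (0:ℕ→ℝ) i = 0 := by simp
      rw [this]
      linarith
  · obtain ⟨Y, hYsupp, hYbd, hYw⟩ := findim_dual F hF0 n w hwmem hwsupp hw0
    refine ⟨Y, n, hYsupp, ⟨?_, ?_⟩, ?_, ?_⟩
    · -- bounded
      refine ⟨∑ i ∈ Finset.range n, |Y i|, ?_⟩
      rintro c ⟨m, rfl⟩
      show |Y m| ≤ ∑ i ∈ Finset.range n, |Y i|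
      by_cases h : m < n
      · exact Finset.single_le_sum (f := fun i => |Y i|)
          (fun i _ => abs_nonneg _) (Finset.mem_range.2 h)
      · rw [hYsupp m (by omega)]
        simp only [abs_zero]
        exact Finset.sum_nonneg (fun i _ => abs_nonneg _)
    · -- summable
      intro x hx
      refine summable_of_ne_finset_zero (s := Finset.range n) (fun m hm => ?_)
      rw [hYsupp m (by simpa using hm), mul_zero, abs_zero]
    · -- kDualNrm ≤ 1
      refine Real.sSup_le ?_ zero_le_one
      rintro c ⟨x, hx, hx1, rfl⟩
      set v : ℕ → ℝ := fun m => if m < n then (if x m * Y m < 0 then -x m else x m) else 0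
        with hv
      have hvmem := F.solid v x (fun m => by
        by_cases h : m < n
        · by_cases h2 : x m * Y m < 0 <;> simp [hv, h, h2, abs_neg, le_refl]
        · simp [hv, h, abs_nonneg]) hx
      have hvsupp : ∀ m, n ≤ m → v m = 0 := fun m hm => by
        simp [hv, Nat.not_lt.2 hm]
      have hsum : (∑' m, |x m * Y m|) = ∑ m ∈ Finset.range n, |x m * Y m| :=
        tsum_eq_sum (fun m hm => by
          rw [hYsupp m (by simpa using hm), mul_zero, abs_zero])
      have hterm : ∀ m ∈ Finset.range n, |x m * Y m| = v m * Y m := by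
        intro m hm
        have h : m < n := Finset.mem_range.1 hm
        by_cases h2 : x m * Y m < 0
        · rw [abs_of_neg h2]
          have hvm : v m = -x m := by simp [hv, h, h2]
          rw [hvm]; ring
        · rw [abs_of_nonneg (not_lt.1 h2)]
          have hvm : v m = x m := by simp [hv, h, h2]
          rw [hvm]
      rw [hsum, Finset.sum_congr rfl hterm]
      exact le_trans (hYbd v hvmem.1 hvsupp) (le_trans hvmem.2 hx1)
    · -- pairing
      have h1 : ∑ i ∈ Finset.range n, z i * Y i = ∑ i ∈ Finset.range n, w i * Y i :=
        Finset.sum_congr rfl (fun i hi => by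
          rw [hw]; simp [Finset.mem_range.1 hi])
      rw [h1, hYw, hnw]
      linarith

end
end Paper

/-- If `E, F` are symmetric sequence spaces, `F` has a Fatou norm and the
matrix `A` is a bounded operator from `E` to `F`, then
`‖A‖_{B(E,F)} = ‖Aᵀ‖_{B(F^×, E^×)}`. -/
theorem stmt11 (E F : Paper.SymmSeqSpace) (hF : Paper.HasFatouNorm F)
    (A : ℕ → ℕ → ℝ)
    (hA : Paper.IsBddOp A E.carrier F.carrier E.nrm F.nrm) :
    Paper.opNrm A E.carrier E.nrm F.nrm =
      Paper.opNrm (Paper.transpose A) (Paper.kDual F.carrier)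
        (Paper.kDualNrm F.carrier F.nrm) (Paper.kDualNrm E.carrier E.nrm) := by
  classical
  obtain ⟨hmaps, C, hC⟩ := hA
  set S1 : Set ℝ := {c | ∃ x ∈ E.carrier, E.nrm x ≤ 1 ∧ c = F.nrm (Paper.matApply A x)}
    with hS1def
  have hLHS : Paper.opNrm A E.carrier E.nrm F.nrm = sSup S1 := rfl
  set S2 : Set ℝ := {c | ∃ y ∈ Paper.kDual F.carrier,
      Paper.kDualNrm F.carrier F.nrm y ≤ 1 ∧
      c = Paper.kDualNrm E.carrier E.nrm (Paper.matApply (Paper.transpose A) y)}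
    with hS2def
  have hRHS : Paper.opNrm (Paper.transpose A) (Paper.kDual F.carrier)
      (Paper.kDualNrm F.carrier F.nrm) (Paper.kDualNrm E.carrier E.nrm) = sSup S2 := rfl
  have hnrmE0 : E.nrm 0 = 0 := Paper.nrm_zero E
  have hnrmF0 : F.nrm 0 = 0 := Paper.nrm_zero F
  have hmA0 : ∀ B : ℕ → ℕ → ℝ, Paper.matApply B 0 = 0 := fun B => funext fun i => by
    simp [Paper.matApply]
  have h0S1 : (0:ℝ) ∈ S1 :=
    ⟨0, E.zero_mem, by rw [hnrmE0]; norm_num, by rw [hmA0, hnrmF0]⟩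
  have hS1ub : ∀ c ∈ S1, c ≤ |C| := by
    rintro c ⟨x, hx, hx1, rfl⟩
    calc F.nrm (Paper.matApply A x) ≤ C * E.nrm x := hC x hx
    _ ≤ |C| * E.nrm x := mul_le_mul_of_nonneg_right (le_abs_self C) (E.nrm_nonneg x)
    _ ≤ |C| * 1 := mul_le_mul_of_nonneg_left hx1 (abs_nonneg C)
    _ = |C| := mul_one _
  have hS1bdd : BddAbove S1 := ⟨|C|, hS1ub⟩
  have hL0 : 0 ≤ sSup S1 := le_csSup hS1bdd h0S1
  have hkd0 : ∀ S : Set (ℕ → ℝ), (0:ℕ→ℝ) ∈ Paper.kDual S := fun S =>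
    ⟨⟨0, by rintro c ⟨m, rfl⟩; simp⟩, fun x hx => by simpa using summable_zero⟩
  have hkdN0F : Paper.kDualNrm F.carrier F.nrm 0 ≤ 1 := by
    refine Real.sSup_le ?_ zero_le_one
    rintro c ⟨x, hx, h1, rfl⟩
    simpa using zero_le_one
  have hkdNE_zero : Paper.kDualNrm E.carrier E.nrm 0 = 0 := by
    have hset : {c | ∃ x ∈ E.carrier, E.nrm x ≤ 1 ∧ c = ∑' n, |x n * (0:ℕ→ℝ) n|}
        = {0} := by
      ext c
      simp only [Set.mem_singleton_iff, Set.mem_setOf_eq]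
      constructor
      · rintro ⟨x, hx, h1, rfl⟩; simp
      · rintro rfl
        exact ⟨0, E.zero_mem, by rw [hnrmE0]; norm_num, by simp⟩
    show sSup _ = 0
    rw [hset]
    exact csSup_singleton 0
  have h0S2 : (0:ℝ) ∈ S2 := ⟨0, hkd0 _, hkdN0F, by rw [hmA0, hkdNE_zero]⟩
  rcases Classical.em (∃ z ∈ E.carrier, z ≠ 0) with hE0 | hE0'
  swap
  · -- E trivial
    push_neg at hE0'
    have hTset : ∀ w : ℕ → ℝ,
        {c | ∃ x ∈ E.carrier, E.nrm x ≤ 1 ∧ c = ∑' n, |x n * w n|} = {0} := by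
      intro w; ext c
      simp only [Set.mem_singleton_iff, Set.mem_setOf_eq]
      constructor
      · rintro ⟨x, hx, h1, rfl⟩
        rw [hE0' x hx]; simp
      · rintro rfl
        exact ⟨0, E.zero_mem, by rw [hnrmE0]; norm_num, by simp⟩
    have hS1e : S1 = {0} := by
      ext c
      simp only [Set.mem_singleton_iff, hS1def, Set.mem_setOf_eq]
      constructor
      · rintro ⟨x, hx, h1, rfl⟩
        rw [hE0' x hx, hmA0, hnrmF0]
      · rintro rfl
        exact ⟨0, E.zero_mem, by rw [hnrmE0]; norm_num, by rw [hmA0, hnrmF0]⟩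
    have hS2e : S2 = {0} := by
      ext c
      simp only [Set.mem_singleton_iff, hS2def, Set.mem_setOf_eq]
      constructor
      · rintro ⟨y, hy, hNy, rfl⟩
        show sSup _ = 0
        rw [hTset]
        exact csSup_singleton 0
      · rintro rfl
        exact ⟨0, hkd0 _, hkdN0F, by rw [hmA0, hkdNE_zero]⟩
    rw [hLHS, hRHS, hS1e, hS2e]
  rcases Classical.em (∃ z ∈ F.carrier, z ≠ 0) with hF0 | hF0'
  swap
  · -- F trivial
    push_neg at hF0'
    have hcolv : ∀ i j, Paper.matApply A (Paper.sgl j) i = A i j := by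
      intro i j
      have h := tsum_eq_single (L := SummationFilter.unconditional ℕ) (f := fun k => A i k * Paper.sgl j k) j
        (fun b hb => by simp [Paper.sgl, hb])
      simpa [Paper.matApply, Paper.sgl] using h
    have hA0 : ∀ i j, A i j = 0 := by
      intro i j
      have hsg := Paper.sgl_mem E hE0 j
      have hm := (hmaps _ hsg.1).2
      have h2 := hcolv i j
      rw [hF0' _ hm] at h2
      simpa using h2.symm
    have hAT0 : ∀ y : ℕ → ℝ, Paper.matApply (Paper.transpose A) y = 0 := fun y =>
      funext fun j => by simp [Paper.matApply, Paper.transpose, hA0]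
    have hS1e : S1 = {0} := by
      ext c
      simp only [Set.mem_singleton_iff, hS1def, Set.mem_setOf_eq]
      constructor
      · rintro ⟨x, hx, h1, rfl⟩
        rw [hF0' _ (hmaps x hx).2, hnrmF0]
      · rintro rfl
        exact ⟨0, E.zero_mem, by rw [hnrmE0]; norm_num, by rw [hmA0, hnrmF0]⟩
    have hS2e : S2 = {0} := by
      ext c
      simp only [Set.mem_singleton_iff, hS2def, Set.mem_setOf_eq]
      constructor
      · rintro ⟨y, hy, hNy, rfl⟩
        rw [hAT0, hkdNE_zero]
      · rintro rfl
        exact ⟨0, hkd0 _, hkdN0F, by rw [hmA0, hkdNE_zero]⟩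
    rw [hLHS, hRHS, hS1e, hS2e]
  -- main case
  have hcolv : ∀ j, Paper.matApply A (Paper.sgl j) = fun i => A i j := by
    intro j; funext i
    have h := tsum_eq_single (L := SummationFilter.unconditional ℕ) (f := fun k => A i k * Paper.sgl j k) j
      (fun b hb => by simp [Paper.sgl, hb])
    simpa [Paper.matApply, Paper.sgl] using h
  have hcolmem : ∀ j, (fun i => A i j) ∈ F.carrier := fun j => by
    rw [← hcolv j]; exact (hmaps _ (Paper.sgl_mem E hE0 j).1).2
  have hcolnrm : ∀ j, F.nrm (fun i => A i j) ≤ |C| := by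
    intro j
    rw [← hcolv j]
    have h := hC _ (Paper.sgl_mem E hE0 j).1
    rw [(Paper.sgl_mem E hE0 j).2, mul_one] at h
    exact le_trans h (le_abs_self C)
  have habd : ∀ i j, |A i j| ≤ |C| := fun i j =>
    le_trans (Paper.eval_le_nrm hF0 (hcolmem j) i) (hcolnrm j)
  have hcolsum : ∀ y ∈ Paper.kDual F.carrier, ∀ j,
      Summable (fun i => A i j * y i) := by
    intro y hy j
    exact (hy.2 _ (hcolmem j)).of_abs
  -- the core estimate
  have hcore : ∀ y ∈ Paper.kDual F.carrier, Paper.kDualNrm F.carrier F.nrm y ≤ 1 →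
      ∀ x ∈ E.carrier, E.nrm x ≤ 1 → ∀ s : Finset ℕ,
      ∑ j ∈ s, |x j * Paper.matApply (Paper.transpose A) y j| ≤ sSup S1 := by
    intro y hy hNy x hx hx1 s
    set w : ℕ → ℝ := Paper.matApply (Paper.transpose A) y with hwdef
    set x' : ℕ → ℝ := fun j => if j ∈ s then (if x j * w j < 0 then -x j else x j) else 0
      with hx'
    have hx'mem := E.solid x' x (fun j => by
      by_cases h : j ∈ s
      · by_cases h2 : x j * w j < 0 <;> simp [hx', h, h2, abs_neg, le_refl]
      · simp [hx', h, abs_nonneg]) hx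
    have hterm : ∀ j ∈ s, |x j * w j| = x' j * w j := by
      intro j hj
      by_cases h2 : x j * w j < 0
      · rw [abs_of_neg h2]
        have hvm : x' j = -x j := by simp [hx', hj, h2]
        rw [hvm]; ring
      · rw [abs_of_nonneg (not_lt.1 h2)]
        have hvm : x' j = x j := by simp [hx', hj, h2]
        rw [hvm]
    have hw_j : ∀ j, w j = ∑' i, A i j * y i := fun j => rfl
    have hAx' : ∀ i, Paper.matApply A x' i = ∑ j ∈ s, A i j * x' j := fun i =>
      tsum_eq_sum (fun j hj => by
        have : x' j = 0 := by simp [hx', hj]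
        rw [this, mul_zero])
    have hswap : ∑ j ∈ s, x' j * w j = ∑' i, (Paper.matApply A x' i) * y i := by
      calc ∑ j ∈ s, x' j * w j = ∑ j ∈ s, ∑' i, x' j * (A i j * y i) := by
            refine Finset.sum_congr rfl (fun j _ => ?_)
            rw [hw_j j, ← tsum_mul_left]
      _ = ∑' i, ∑ j ∈ s, x' j * (A i j * y i) :=
            (Summable.tsum_finsetSum (fun j _ => (hcolsum y hy j).mul_left (x' j))).symm
      _ = ∑' i, (Paper.matApply A x' i) * y i := by
            refine tsum_congr (fun i => ?_)
            rw [hAx' i, Finset.sum_mul]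
            exact Finset.sum_congr rfl (fun j _ => by ring)
    have hsumAx'y : Summable (fun i => |Paper.matApply A x' i * y i|) :=
      hy.2 _ (hmaps x' hx'mem.1).2
    have hle1 : ∑' i, (Paper.matApply A x' i) * y i
        ≤ ∑' i, |Paper.matApply A x' i * y i| :=
      Summable.tsum_le_tsum (fun i => le_abs_self _) hsumAx'y.of_abs hsumAx'y
    have hle2 : ∑' i, |Paper.matApply A x' i * y i| ≤ F.nrm (Paper.matApply A x') :=
      Paper.pair_le_nrm F (Paper.dual_set_bdd F hF0 hy) hNy (hmaps x' hx'mem.1).2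
    have hle3 : F.nrm (Paper.matApply A x') ≤ sSup S1 :=
      le_csSup hS1bdd ⟨x', hx'mem.1, le_trans hx'mem.2 hx1, rfl⟩
    calc ∑ j ∈ s, |x j * w j| = ∑ j ∈ s, x' j * w j := Finset.sum_congr rfl hterm
    _ ≤ sSup S1 := by rw [hswap]; exact le_trans hle1 (le_trans hle2 hle3)
  have hcoreT : ∀ y ∈ Paper.kDual F.carrier, Paper.kDualNrm F.carrier F.nrm y ≤ 1 →
      ∀ x ∈ E.carrier, E.nrm x ≤ 1 →
      ∑' j, |x j * Paper.matApply (Paper.transpose A) y j| ≤ sSup S1 := by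
    intro y hy hNy x hx hx1
    by_cases hsm : Summable (fun j => |x j * Paper.matApply (Paper.transpose A) y j|)
    · exact Summable.tsum_le_of_sum_le hsm (hcore y hy hNy x hx hx1)
    · rw [tsum_eq_zero_of_not_summable hsm]
      exact hL0
  have hS2ub : ∀ c ∈ S2, c ≤ sSup S1 := by
    rintro c ⟨y, hy, hNy, rfl⟩
    refine Real.sSup_le ?_ hL0
    rintro c' ⟨x, hx, hx1, rfl⟩
    exact hcoreT y hy hNy x hx hx1
  have hS2bdd : BddAbove S2 := ⟨sSup S1, hS2ub⟩
  have hR0 : 0 ≤ sSup S2 := le_csSup hS2bdd h0S2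
  rw [hLHS, hRHS]
  refine le_antisymm ?_ (Real.sSup_le hS2ub hL0)
  refine Real.sSup_le ?_ hR0
  rintro c ⟨x, hx, hx1, rfl⟩
  refine le_of_forall_pos_le_add (fun ε hε => ?_)
  obtain ⟨Y, n, hYsupp, hYkd, hYN, hYlb⟩ := Paper.norming F hF0 hF (hmaps x hx).2 hε
  set w : ℕ → ℝ := Paper.matApply (Paper.transpose A) Y with hwdef
  have hw_j : ∀ j, w j = ∑ i ∈ Finset.range n, A i j * Y i := fun j =>
    tsum_eq_sum (fun i hi => by
      rw [hYsupp i (by simpa using hi), mul_zero])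
  have hpair : ∑ i ∈ Finset.range n, (Paper.matApply A x) i * Y i = ∑' j, x j * w j := by
    calc ∑ i ∈ Finset.range n, (Paper.matApply A x) i * Y i
        = ∑ i ∈ Finset.range n, ∑' j, Y i * (A i j * x j) := by
          refine Finset.sum_congr rfl (fun i _ => ?_)
          rw [mul_comm]
          have hmm : Paper.matApply A x i = ∑' j, A i j * x j := rfl
          rw [hmm, ← tsum_mul_left]
    _ = ∑' j, ∑ i ∈ Finset.range n, Y i * (A i j * x j) :=
          (Summable.tsum_finsetSum (fun i _ => ((hmaps x hx).1 i).mul_left (Y i))).symm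
    _ = ∑' j, x j * w j := by
          refine tsum_congr (fun j => ?_)
          rw [hw_j j, Finset.mul_sum]
          exact Finset.sum_congr rfl (fun i _ => by ring)
  have hwkd : w ∈ Paper.kDual E.carrier := by
    constructor
    · refine ⟨∑ i ∈ Finset.range n, |C| * |Y i|, ?_⟩
      rintro c' ⟨j, rfl⟩
      show |w j| ≤ _
      rw [hw_j j]
      refine le_trans (Finset.abs_sum_le_sum_abs _ _) ?_
      refine Finset.sum_le_sum (fun i _ => ?_)
      rw [abs_mul]
      exact mul_le_mul_of_nonneg_right (habd i j) (abs_nonneg _)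
    · intro x'' hx''
      have hgsum : Summable (fun j => ∑ i ∈ Finset.range n, |Y i| * |A i j * x'' j|) :=
        summable_sum (fun i _ => (((hmaps x'' hx'').1 i).abs.mul_left _))
      refine Summable.of_nonneg_of_le (fun j => abs_nonneg _) (fun j => ?_) hgsum
      rw [abs_mul, hw_j j]
      calc |x'' j| * |∑ i ∈ Finset.range n, A i j * Y i|
          ≤ |x'' j| * ∑ i ∈ Finset.range n, |A i j * Y i| :=
            mul_le_mul_of_nonneg_left (Finset.abs_sum_le_sum_abs _ _) (abs_nonneg _)
      _ = ∑ i ∈ Finset.range n, |Y i| * |A i j * x'' j| := by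
            rw [Finset.mul_sum]
            refine Finset.sum_congr rfl (fun i _ => ?_)
            rw [abs_mul, abs_mul]
            ring
  have hsumxw : Summable (fun j => |x j * w j|) := hwkd.2 x hx
  have hTwbdd : BddAbove {c | ∃ x' ∈ E.carrier, E.nrm x' ≤ 1 ∧ c = ∑' j, |x' j * w j|} := by
    refine ⟨sSup S1, ?_⟩
    rintro c' ⟨x'', hx'', hx''1, rfl⟩
    exact hcoreT Y hYkd hYN x'' hx'' hx''1
  have hfin : F.nrm (Paper.matApply A x) - ε ≤ sSup S2 := by
    calc F.nrm (Paper.matApply A x) - ε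
        ≤ ∑ i ∈ Finset.range n, (Paper.matApply A x) i * Y i := hYlb
    _ = ∑' j, x j * w j := hpair
    _ ≤ ∑' j, |x j * w j| :=
          Summable.tsum_le_tsum (fun j => le_abs_self _) hsumxw.of_abs hsumxw
    _ ≤ Paper.kDualNrm E.carrier E.nrm w := le_csSup hTwbdd ⟨x, hx, hx1, rfl⟩
    _ ≤ sSup S2 := le_csSup hS2bdd ⟨Y, hYkd, hYN, rfl⟩
  linarith
end
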